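/- arXiv:2510.22116 — 4 statements merged into one kernel-verified Lean document; each statement's English description precedes it below -/
import Mathlib

section
/- Let P = ℤ^d or ℝ^d with the product order, S = (S_1,…,S_n) a sequence of pairwise disjoint finite subsets of P with n ≥ 2, and M, N pointwise finite-dimensional persistence modules over P. Define d_E(M,N)_S := max_{0 ≤ i ≤ n−1} d_E(rk^i_{M,S}, rk^i_{N,S}) and d_L(M,N)_S := max_{0 ≤ i ≤ n−1} ‖λ_{rk^i_{M,S}} − λ_{rk^i_{N,S}}‖_∞. Then d_L(M,N)_S ≤ d_E(M,N)_S ≤ d_I(M,N). -/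
open scoped Classical ENNReal

noncomputable section

/-- A persistence module over a poset `P` with coefficients in a field `K`:
vector spaces `V x` together with structure maps `map : V x →ₗ V y` for `x ≤ y`. -/
structure PersistenceModule (K : Type) [Field K] (P : Type) [PartialOrder P] where
  V : P → Type
  [acg : ∀ x, AddCommGroup (V x)]
  [mod : ∀ x, Module K (V x)]
  map : ∀ {x y : P}, x ≤ y → (V x →ₗ[K] V y)
  map_refl : ∀ x : P, map (le_refl x) = LinearMap.id
  map_comp : ∀ {x y z : P} (hxy : x ≤ y) (hyz : y ≤ z),
      (map hyz).comp (map hxy) = map (hxy.trans hyz)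

attribute [instance] PersistenceModule.acg PersistenceModule.mod

variable {K : Type} [Field K]

section Basic

variable {P : Type} [PartialOrder P]

/-- Pointwise finite-dimensionality. -/
def PersistenceModule.pfd (M : PersistenceModule K P) : Prop :=
  ∀ x, FiniteDimensional K (M.V x)

/-- A morphism of persistence modules. -/
structure PersistenceHom (M N : PersistenceModule K P) where
  app : ∀ x, M.V x →ₗ[K] N.V x
  naturality : ∀ {x y : P} (h : x ≤ y),
      (app y).comp (M.map h) = (N.map h).comp (app x)

/-- The identity morphism. -/
def PersistenceHom.id (M : PersistenceModule K P) : PersistenceHom M M where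
  app _ := LinearMap.id
  naturality _ := by simp

/-- Composition of morphisms of persistence modules. -/
def PersistenceHom.comp {M N L : PersistenceModule K P}
    (g : PersistenceHom N L) (f : PersistenceHom M N) : PersistenceHom M L where
  app x := (g.app x).comp (f.app x)
  naturality {x y} h := by
    ext v
    have hf := LinearMap.congr_fun (f.naturality h) v
    have hg := LinearMap.congr_fun (g.naturality h) (f.app x v)
    simp only [LinearMap.comp_apply] at hf hg ⊢
    rw [hf, hg]

/-- Two persistence modules are isomorphic iff there is a morphism which is
pointwise bijective. -/
def PersistenceIso (M N : PersistenceModule K P) : Prop :=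
  ∃ f : PersistenceHom M N, ∀ x, Function.Bijective (f.app x)

/-- The (pointwise) direct sum of two persistence modules. -/
def PersistenceModule.dsum (M₁ M₂ : PersistenceModule K P) : PersistenceModule K P where
  V x := M₁.V x × M₂.V x
  map h := (M₁.map h).prodMap (M₂.map h)
  map_refl x := by
    show (M₁.map (le_refl x)).prodMap (M₂.map (le_refl x)) = LinearMap.id
    rw [M₁.map_refl, M₂.map_refl]; rfl
  map_comp hxy hyz := by
    show ((M₁.map hyz).prodMap (M₂.map hyz)).comp ((M₁.map hxy).prodMap (M₂.map hxy)) =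
      (M₁.map (hxy.trans hyz)).prodMap (M₂.map (hxy.trans hyz))
    rw [← M₁.map_comp hxy hyz, ← M₂.map_comp hxy hyz]; rfl

/-- The rank of a linear map, as a natural number. -/
noncomputable def lrank {V W : Type} [AddCommGroup V] [Module K V]
    [AddCommGroup W] [Module K W] (f : V →ₗ[K] W) : ℕ :=
  Module.finrank K (LinearMap.range f)

/-- The classical rank invariant of a persistence module. -/
noncomputable def rankInv (M : PersistenceModule K P) (x y : P) : ℕ∞ :=
  if h : x ≤ y then (lrank (M.map h) : ℕ∞) else ⊤

variable {n : ℕ}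

/-- The index set of the restriction `M|_S`: the disjoint union of the slices. -/
abbrev SliceIdx (S : Fin n → Finset P) : Type := Σ i : Fin n, {x // x ∈ S i}

/-- The underlying vector space of the restriction `M|_S = ⊕_{x ∈ S₁ ∪ … ∪ Sₙ} M_x`. -/
abbrev sliceSpace (M : PersistenceModule K P) (S : Fin n → Finset P) : Type :=
  (p : SliceIdx S) → M.V p.2.1

/-- The nilpotent operator `T_{M,S}` on `M|_S`: its component `M_x → M_y` is the
structure map `M_{yx}` if `x ∈ S_i`, `y ∈ S_{i+1}` and `x ≤ y`, and `0` otherwise. -/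
noncomputable def TMap (M : PersistenceModule K P) (S : Fin n → Finset P) :
    sliceSpace M S →ₗ[K] sliceSpace M S :=
  LinearMap.pi fun p => ∑ q : SliceIdx S,
    if h : (q.1 : ℕ) + 1 = (p.1 : ℕ) ∧ q.2.1 ≤ p.2.1 then
      (M.map h.2).comp (LinearMap.proj q)
    else 0

/-- The restriction `f|_S = ⊕_{x ∈ S} f_x` of a morphism to the slices. -/
noncomputable def sliceHom {M N : PersistenceModule K P} (f : PersistenceHom M N)
    (S : Fin n → Finset P) : sliceSpace M S →ₗ[K] sliceSpace N S :=
  LinearMap.pi fun p => (f.app p.2.1).comp (LinearMap.proj p)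

/-- The `i`-th entry of the Jordan type of `M` at `S` (as an integer):
`a_i = rank(T^{i-1}) + rank(T^{i+1}) - 2 rank(T^i)`, the number of `i × i`
Jordan blocks of the nilpotent operator `T_{M,S}`. -/
noncomputable def jt (M : PersistenceModule K P) (S : Fin n → Finset P) (i : ℕ) : ℤ :=
  (lrank (TMap M S ^ (i - 1)) : ℤ) + (lrank (TMap M S ^ (i + 1)) : ℤ)
    - 2 * (lrank (TMap M S ^ i) : ℤ)

end Basic

section Shifts

variable {P : Type} [AddCommGroup P] [PartialOrder P] [IsOrderedAddMonoid P]

/-- The shift `M[x]` of a persistence module, `(M[x])_z = M_{x+z}`. -/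
def PersistenceModule.shift (M : PersistenceModule K P) (x : P) :
    PersistenceModule K P where
  V z := M.V (x + z)
  map h := M.map (add_le_add_right h x)
  map_refl z := M.map_refl (x + z)
  map_comp hxy hyz := M.map_comp _ _

/-- Shifts preserve pointwise finite-dimensionality. -/
theorem PersistenceModule.pfd.shift {M : PersistenceModule K P} (hM : M.pfd) (x : P) :
    (M.shift x).pfd := fun z => hM (x + z)

/-- The shift `f[x]` of a morphism of persistence modules. -/
def PersistenceHom.shiftHom {M N : PersistenceModule K P} (f : PersistenceHom M N)
    (x : P) : PersistenceHom (M.shift x) (N.shift x) where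
  app z := f.app (x + z)
  naturality h := f.naturality (add_le_add_right h x)

/-- The shift morphism `sh_M^ε : M → M[ε]`, with components `M_{z+ε,z}`. -/
def shMor (M : PersistenceModule K P) (ε : P) (hε : 0 ≤ ε) :
    PersistenceHom M (M.shift ε) where
  app z := M.map (le_add_of_nonneg_left hε)
  naturality {z w} h := by
    show (M.map (le_add_of_nonneg_left hε)).comp (M.map h) =
      (M.map (add_le_add_right h ε)).comp (M.map (le_add_of_nonneg_left hε))
    rw [M.map_comp, M.map_comp]

/-- `(f, g)` form an `ε`-interleaving between `M` and `N`: componentwise,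
`g[ε] ∘ f = sh_M^{2ε}` and `f[ε] ∘ g = sh_N^{2ε}`. -/
def IsInterleavingPair {M N : PersistenceModule K P} (ε : P) (hε : 0 ≤ ε)
    (f : PersistenceHom M (N.shift ε)) (g : PersistenceHom N (M.shift ε)) : Prop :=
  (∀ z : P, (g.app (ε + z)).comp (f.app z) =
    M.map ((le_add_of_nonneg_left hε).trans
      (add_le_add_right (le_add_of_nonneg_left hε) ε))) ∧
  (∀ z : P, (f.app (ε + z)).comp (g.app z) =
    N.map ((le_add_of_nonneg_left hε).trans
      (add_le_add_right (le_add_of_nonneg_left hε) ε)))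

/-- There exists an `ε`-interleaving between `M` and `N`. -/
def IsInterleaving (M N : PersistenceModule K P) (ε : P) (hε : 0 ≤ ε) : Prop :=
  ∃ (f : PersistenceHom M (N.shift ε)) (g : PersistenceHom N (M.shift ε)),
    IsInterleavingPair ε hε f g

variable {n : ℕ}

/-- The map `⊕_{z ∈ S} M_{y+z,x+z} : M[x]|_S → M[y]|_S` for `x ≤ y`. -/
noncomputable def transMap (M : PersistenceModule K P) (S : Fin n → Finset P)
    {x y : P} (h : x ≤ y) :
    sliceSpace (M.shift x) S →ₗ[K] sliceSpace (M.shift y) S :=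
  LinearMap.pi fun p => (M.map (add_le_add_left h p.2.1)).comp (LinearMap.proj p)

/-- The degree-`i` Jordan rank invariant `rk^i_{M,S}(x,y)`: for `x ≤ y` it is the rank
of the structure map `(M^i_S)_{yx}` of the degree-`i` Jordan module, i.e. the rank of
the restriction of `⊕_z M_{y+z,x+z}` to `Im(T^i_{M[x],S})`; it is `∞` otherwise. -/
noncomputable def jordanRk (M : PersistenceModule K P) (S : Fin n → Finset P)
    (i : ℕ) (x y : P) : ℕ∞ :=
  if h : x ≤ y then
    (Module.finrank K
      (Submodule.map (transMap M S h) (LinearMap.range (TMap (M.shift x) S ^ i))) : ℕ∞)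
  else ⊤

end Shifts

section Functors

variable {P : Type} [PartialOrder P]

/-- A functor from the category of pointwise finite-dimensional persistence modules
over `P` to the category of finite-dimensional `K`-vector spaces. -/
structure PMFunctor (K : Type) [Field K] (P : Type) [PartialOrder P] where
  obj : (M : PersistenceModule K P) → M.pfd → Type
  [objAcg : ∀ M hM, AddCommGroup (obj M hM)]
  [objMod : ∀ M hM, Module K (obj M hM)]
  objFin : ∀ M hM, FiniteDimensional K (obj M hM)
  fmap : {M N : PersistenceModule K P} → (hM : M.pfd) → (hN : N.pfd) →
      PersistenceHom M N → (obj M hM →ₗ[K] obj N hN)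
  fmap_id : ∀ (M : PersistenceModule K P) (hM : M.pfd),
      fmap hM hM (PersistenceHom.id M) = LinearMap.id
  fmap_comp : ∀ {M N L : PersistenceModule K P} (hM : M.pfd) (hN : N.pfd) (hL : L.pfd)
      (f : PersistenceHom M N) (g : PersistenceHom N L),
      fmap hM hL (g.comp f) = (fmap hN hL g).comp (fmap hM hN f)

attribute [instance] PMFunctor.objAcg PMFunctor.objMod

end Functors

section FRank

variable {P : Type} [AddCommGroup P] [PartialOrder P] [IsOrderedAddMonoid P]

/-- The `F`-rank invariant `rk_{M,F}(x,y)`: for `x ≤ y` it is the rank of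
`F(sh^{y-x}_{M[x]}) : F(M[x]) → F(M[x][y-x])`, and `∞` otherwise. -/
noncomputable def frk (F : PMFunctor K P) (M : PersistenceModule K P) (hM : M.pfd)
    (x y : P) : ℕ∞ :=
  if h : x ≤ y then
    (lrank (F.fmap (hM.shift x) ((hM.shift x).shift (y - x))
      (shMor (M.shift x) (y - x) (sub_nonneg.mpr h))) : ℕ∞)
  else ⊤

end FRank

section RankFunctions

variable {P : Type} [PartialOrder P]

/-- A rank function: `∞` off the order relation, and "erosion monotone". -/
def IsRankFunction (F : P → P → ℕ∞) : Prop :=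
  (∀ x y : P, ¬ x ≤ y → F x y = ⊤) ∧
  ∀ x x' y' y : P, x ≤ x' → x' ≤ y' → y' ≤ y → F x y ≤ F x' y'

end RankFunctions

section Distances

variable {R : Type} [CommRing R] [LinearOrder R] [IsStrictOrderedRing R] {d : ℕ}

/-- The interleaving distance between two persistence modules over `Fin d → R`,
computed in `ℝ≥0∞` via the embedding `toR : R → ℝ`. -/
noncomputable def interleavingDist (toR : R → ℝ)
    (M N : PersistenceModule K (Fin d → R)) : ℝ≥0∞ :=
  sInf {c : ℝ≥0∞ | ∃ (ε : R) (hε : 0 ≤ ε),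
    IsInterleaving M N (fun _ => ε) (fun _ => hε) ∧ c = ENNReal.ofReal (toR ε)}

/-- The erosion distance between two `ℕ∞`-valued functions on pairs of points. -/
noncomputable def erosionDist (toR : R → ℝ)
    (F G : (Fin d → R) → (Fin d → R) → ℕ∞) : ℝ≥0∞ :=
  sInf {c : ℝ≥0∞ | ∃ ε : R, 0 ≤ ε ∧
    (∀ x y : Fin d → R, x ≤ y →
      F (x - fun _ => ε) (y + fun _ => ε) ≤ G x y ∧
      G (x - fun _ => ε) (y + fun _ => ε) ≤ F x y) ∧
    c = ENNReal.ofReal (toR ε)}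

/-- The persistence landscape `λ_F(k,x)` of a rank function `F`. -/
noncomputable def landscape (toR : R → ℝ)
    (F : (Fin d → R) → (Fin d → R) → ℕ∞) (k : ℕ) (x : Fin d → R) : ℝ≥0∞ :=
  sSup {c : ℝ≥0∞ | ∃ ε : ℝ, 0 < ε ∧
    (∀ h : Fin d → R, (∀ i, |toR (h i)| ≤ ε) → (k : ℕ∞) ≤ F (x - h) (x + h)) ∧
    c = ENNReal.ofReal ε}

/-- The sup-distance `‖λ_F - λ_G‖_∞` between the landscapes of `F` and `G`. -/
noncomputable def landscapeDist (toR : R → ℝ)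
    (F G : (Fin d → R) → (Fin d → R) → ℕ∞) : ℝ≥0∞ :=
  ⨆ (k : ℕ) (x : Fin d → R),
    max (landscape toR F k x - landscape toR G k x)
      (landscape toR G k x - landscape toR F k x)

end Distances

section Zigzag

variable {P : Type} [PartialOrder P] {n : ℕ}

/-- The orientation relation of a zigzag: for each `k < n - 1`, exactly one
of the covering pairs `(k, k+1)` (if `ω k = true`) or `(k+1, k)` (if `ω k = false`),
and no other pairs. -/
def zigzagStep (n : ℕ) (ω : ℕ → Bool) (i j : Fin n) : Prop :=
  ((j : ℕ) = (i : ℕ) + 1 ∧ ω (i : ℕ) = true) ∨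
  ((i : ℕ) = (j : ℕ) + 1 ∧ ω (j : ℕ) = false)

/-- `P` is a zigzag poset on `{0, …, n-1}` via the labeling `e`, with orientation `ω`:
the order of `P` is the reflexive-transitive closure of the zigzag relation. -/
def IsZigzag (n : ℕ) (ω : ℕ → Bool) (e : P ≃ Fin n) : Prop :=
  ∀ a b : P, a ≤ b ↔ Relation.ReflTransGen (zigzagStep n ω) (e a) (e b)

/-- The subposet `{i, …, j}` of a labeled poset. -/
def zzInterval (e : P ≃ Fin n) (i j : ℕ) : Set P :=
  {p | i ≤ (e p : ℕ) ∧ (e p : ℕ) ≤ j}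

/-- `S⁺_{ij}`: the minimal elements of the subposet `{i, …, j}`. -/
def zzMin (e : P ≃ Fin n) (i j : ℕ) : Set P :=
  {p | p ∈ zzInterval e i j ∧ ∀ q ∈ zzInterval e i j, q ≤ p → q = p}

/-- `S⁻_{ij}`: the maximal elements of the subposet `{i, …, j}`. -/
def zzMax (e : P ≃ Fin n) (i j : ℕ) : Set P :=
  {p | p ∈ zzInterval e i j ∧ ∀ q ∈ zzInterval e i j, p ≤ q → q = p}

/-- The map `T_{M,S_{ij}} : ⊕_{x ∈ S⁺_{ij}} M_x → ⊕_{y ∈ S⁻_{ij}} M_y`, whose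
`(y,x)`-component is `M_{yx}` if `x ≤ y` and `0` otherwise. -/
noncomputable def Tij (e : P ≃ Fin n) (M : PersistenceModule K P) (i j : ℕ) :
    ((x : zzMin e i j) → M.V x.1) →ₗ[K] ((y : zzMax e i j) → M.V y.1) :=
  letI : Fintype P := Fintype.ofEquiv (Fin n) e.symm
  LinearMap.pi fun y => ∑ x : zzMin e i j,
    if h : x.1 ≤ y.1 then (M.map h).comp (LinearMap.proj x) else 0

end Zigzag

section Jordan

/-- The underlying space of the `K[t]/(t^n)`-module `⊕_{i=1}^n (K[t]/(t^i))^{a_i}`,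
where the summand of dimension `(i : Fin n) + 1` occurs with multiplicity `a i`. -/
abbrev jordanSpace (K : Type) (n : ℕ) (a : Fin n → ℕ) : Type :=
  (i : Fin n) → Fin (a i) → Fin ((i : ℕ) + 1) → K

/-- The nilpotent Jordan block of size `m`, i.e. multiplication by `t` on
`K[t]/(t^m)` in the basis `1, t, …, t^{m-1}`. -/
noncomputable def jordanBlock (K : Type) [Field K] (m : ℕ) :
    (Fin m → K) →ₗ[K] (Fin m → K) :=
  LinearMap.pi fun k =>
    if _ : (k : ℕ) = 0 then 0
    else LinearMap.proj (⟨(k : ℕ) - 1, Nat.lt_of_le_of_lt (Nat.sub_le _ _) k.isLt⟩ : Fin m)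

/-- Multiplication by `t` on `⊕_{i=1}^n (K[t]/(t^i))^{a_i}`. -/
noncomputable def jordanOp (K : Type) [Field K] (n : ℕ) (a : Fin n → ℕ) :
    jordanSpace K n a →ₗ[K] jordanSpace K n a :=
  LinearMap.pi fun i => LinearMap.pi fun j =>
    (jordanBlock K ((i : ℕ) + 1)).comp
      ((LinearMap.proj j :
          (Fin (a i) → Fin ((i : ℕ) + 1) → K) →ₗ[K] (Fin ((i : ℕ) + 1) → K)).comp
        (LinearMap.proj i :
          jordanSpace K n a →ₗ[K] (Fin (a i) → Fin ((i : ℕ) + 1) → K)))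

/-- Two pairs (vector space, endomorphism) are isomorphic as `K[t]`-modules. -/
def OpIso {K : Type} [Field K] {V W : Type} [AddCommGroup V] [Module K V]
    [AddCommGroup W] [Module K W] (T : V →ₗ[K] V) (U : W →ₗ[K] W) : Prop :=
  ∃ e : V ≃ₗ[K] W, ∀ v, e (T v) = U (e v)

/-- The total space `⊕_{k=1}^n I_k` of the interval representation `I_{[a,b]}`
of the equioriented `A_n` quiver (vertices are `1`-based: vertex `k+1` for `k : Fin n`). -/
abbrev intervalSpace (K : Type) (n a b : ℕ) : Type :=
  {k : Fin n // a ≤ (k : ℕ) + 1 ∧ (k : ℕ) + 1 ≤ b} → K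

/-- The operator `T` on `⊕_k I_k` given by the arrow maps of `I_{[a,b]}`. -/
noncomputable def intervalShift (K : Type) [Field K] (n a b : ℕ) :
    intervalSpace K n a b →ₗ[K] intervalSpace K n a b :=
  LinearMap.pi fun k =>
    if h : a ≤ (k.1 : ℕ) then
      LinearMap.proj
        (⟨⟨(k.1 : ℕ) - 1, Nat.lt_of_le_of_lt (Nat.sub_le _ _) k.1.isLt⟩,
          ⟨by have h2 := k.2.2; show a ≤ (k.1 : ℕ) - 1 + 1; omega,
           by have h2 := k.2.2; show (k.1 : ℕ) - 1 + 1 ≤ b; omega⟩⟩ :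
          {k : Fin n // a ≤ (k : ℕ) + 1 ∧ (k : ℕ) + 1 ≤ b})
    else 0

end Jordan

section Grid

variable {d : ℕ}

/-- The grid `[0,ℓ₁] × … × [0,ℓ_d] ⊆ ℤ^d`. -/
def gridSet (d : ℕ) (ℓ : Fin d → ℕ) : Set (Fin d → ℤ) :=
  {x | ∀ k, 0 ≤ x k ∧ x k ≤ (ℓ k : ℤ)}

/-- The norm slice `S_{i+1} = {x ∈ G : x₁ + … + x_d = i}` of the grid. -/
noncomputable def gridSlice (d : ℕ) (ℓ : Fin d → ℕ) (i : ℕ) : Finset (Fin d → ℤ) :=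
  (Fintype.piFinset fun k => Finset.Icc (0 : ℤ) (ℓ k)).filter
    fun x => (∑ k, x k) = (i : ℤ)

/-- A persistence module over `ℤ^d` is supported on `G` if it vanishes off `G`. -/
def supportedOn (M : PersistenceModule K (Fin d → ℤ)) (G : Set (Fin d → ℤ)) : Prop :=
  ∀ z, z ∉ G → Subsingleton (M.V z)

end Grid

section AnQuiver

variable {P : Type} [PartialOrder P] {n : ℕ}

/-- The space `M|_S(k) = ⊕_{x ∈ S_k} M_x` at the `k`-th vertex of the `A_n` quiver. -/
abbrev sliceLevel (M : PersistenceModule K P) (S : Fin n → Finset P) (k : Fin n) :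
    Type :=
  (x : {a // a ∈ S k}) → M.V x.1

/-- The arrow map `T_{M,S}(k) : M|_S(k) → M|_S(k+1)`, whose `(y,x)`-component
is `M_{yx}` if `x ≤ y` and `0` otherwise. -/
noncomputable def sliceArrow (M : PersistenceModule K P) (S : Fin n → Finset P)
    (k : Fin n) (h : (k : ℕ) + 1 < n) :
    sliceLevel M S k →ₗ[K] sliceLevel M S ⟨(k : ℕ) + 1, h⟩ :=
  LinearMap.pi fun y => ∑ x : {a // a ∈ S k},
    if hxy : x.1 ≤ y.1 then (M.map hxy).comp (LinearMap.proj x) else 0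

/-- The value at vertex `k` (with `1`-based label `k+1`) of the direct sum of the
interval representations `I_{[(ind j).1, (ind j).2]}`, `j : Fin m`, of the
equioriented `A_n` quiver. -/
abbrev sumIntSpace (K : Type) {m : ℕ} (ind : Fin m → ℕ × ℕ) {n : ℕ} (k : Fin n) :
    Type :=
  (j : Fin m) → PLift ((ind j).1 ≤ (k : ℕ) + 1 ∧ (k : ℕ) + 1 ≤ (ind j).2) → K

/-- The arrow map from vertex `k` to vertex `k+1` of the direct sum of interval
representations: the identity on each interval passing through both vertices. -/
noncomputable def sumIntArrow (K : Type) [Field K] {m : ℕ} (ind : Fin m → ℕ × ℕ)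
    {n : ℕ} (k : Fin n) (h : (k : ℕ) + 1 < n) :
    sumIntSpace K ind k →ₗ[K] sumIntSpace K ind (⟨(k : ℕ) + 1, h⟩ : Fin n) :=
  LinearMap.pi fun j => LinearMap.pi fun _ =>
    if hk : (ind j).1 ≤ (k : ℕ) + 1 ∧ (k : ℕ) + 1 ≤ (ind j).2 then
      (LinearMap.proj (PLift.up hk) :
          (PLift ((ind j).1 ≤ (k : ℕ) + 1 ∧ (k : ℕ) + 1 ≤ (ind j).2) → K) →ₗ[K] K).comp
        (LinearMap.proj j : sumIntSpace K ind k →ₗ[K]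
          (PLift ((ind j).1 ≤ (k : ℕ) + 1 ∧ (k : ℕ) + 1 ≤ (ind j).2) → K))
    else 0

end AnQuiver

section AuxProof

open Module

variable {P : Type} [AddCommGroup P] [PartialOrder P] [IsOrderedAddMonoid P] {n : ℕ}

/-- Pointwise application of `TMap`. -/
lemma TMap_apply' (M : PersistenceModule K P) (S : Fin n → Finset P)
    (v : sliceSpace M S) (p : SliceIdx S) :
    TMap M S v p = ∑ q : SliceIdx S,
      if h : (q.1 : ℕ) + 1 = (p.1 : ℕ) ∧ q.2.1 ≤ p.2.1 then
        M.map h.2 (v q) else 0 := by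
  simp only [TMap, LinearMap.pi_apply, LinearMap.sum_apply]
  refine Finset.sum_congr rfl fun q _ => ?_
  split
  · rfl
  · rfl

/-- The slicewise map induced by a morphism `f : M → N[ε]`, viewed as a map
`M[a]|_S → N[x]|_S` whenever `ε + (a + z) = x + z` for all `z`. -/
noncomputable def shiftSliceHom (S : Fin n → Finset P) {M N : PersistenceModule K P}
    {ε : P} (f : PersistenceHom M (N.shift ε)) (a x : P)
    (hax : ∀ z : P, ε + (a + z) = x + z) :
    sliceSpace (M.shift a) S →ₗ[K] sliceSpace (N.shift x) S :=
  LinearMap.pi fun p => (N.map (le_of_eq (hax p.2.1))).comp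
    ((f.app (a + p.2.1)).comp (LinearMap.proj p))

lemma shiftSliceHom_comm (S : Fin n → Finset P) {M N : PersistenceModule K P}
    {ε : P} (f : PersistenceHom M (N.shift ε)) (a x : P)
    (hax : ∀ z : P, ε + (a + z) = x + z) :
    (shiftSliceHom S f a x hax).comp (TMap (M.shift a) S)
      = (TMap (N.shift x) S).comp (shiftSliceHom S f a x hax) := by
  refine LinearMap.ext fun v => funext fun p => ?_
  show (N.map (le_of_eq (hax p.2.1))) ((f.app (a + p.2.1)) ((TMap (M.shift a) S) v p))
    = (TMap (N.shift x) S) (shiftSliceHom S f a x hax v) p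
  rw [TMap_apply', TMap_apply']
  erw [map_sum, map_sum]
  refine Finset.sum_congr rfl fun q _ => ?_
  by_cases hq : (q.1 : ℕ) + 1 = (p.1 : ℕ) ∧ q.2.1 ≤ p.2.1
  · rw [dif_pos hq, dif_pos hq]
    have hvq : shiftSliceHom S f a x hax v q
        = N.map (le_of_eq (hax q.2.1)) (f.app (a + q.2.1) (v q)) := rfl
    rw [hvq]
    have s3 : ((M.shift a).map hq.2) (v q)
        = M.map (add_le_add_right hq.2 a) (v q) := rfl
    rw [s3]
    have s4 : f.app (a + p.2.1) (M.map (add_le_add_right hq.2 a) (v q))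
        = (N.shift ε).map (add_le_add_right hq.2 a) (f.app (a + q.2.1) (v q)) :=
      LinearMap.congr_fun (f.naturality (add_le_add_right hq.2 a)) (v q)
    rw [s4]
    have s5 : ((N.shift ε).map (add_le_add_right hq.2 a)) (f.app (a + q.2.1) (v q))
        = N.map (add_le_add_right (add_le_add_right hq.2 a) ε)
            (f.app (a + q.2.1) (v q)) := rfl
    rw [s5]
    have s6 : ((N.shift x).map hq.2) (N.map (le_of_eq (hax q.2.1)) (f.app (a + q.2.1) (v q)))
        = N.map (add_le_add_right hq.2 x)
            (N.map (le_of_eq (hax q.2.1)) (f.app (a + q.2.1) (v q))) := rfl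
    rw [s6]
    exact (LinearMap.congr_fun
        (N.map_comp (add_le_add_right (add_le_add_right hq.2 a) ε)
          (le_of_eq (hax p.2.1))) _).trans
      (LinearMap.congr_fun
        (N.map_comp (le_of_eq (hax q.2.1)) (add_le_add_right hq.2 x)) _).symm
  · rw [dif_neg hq, dif_neg hq]
    erw [map_zero, map_zero]
    rfl

lemma shiftSliceHom_pow_comm (S : Fin n → Finset P) {M N : PersistenceModule K P}
    {ε : P} (f : PersistenceHom M (N.shift ε)) (a x : P)
    (hax : ∀ z : P, ε + (a + z) = x + z) (i : ℕ) :
    (shiftSliceHom S f a x hax).comp (TMap (M.shift a) S ^ i)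
      = (TMap (N.shift x) S ^ i).comp (shiftSliceHom S f a x hax) := by
  induction i with
  | zero => simp [pow_zero, Module.End.one_eq_id]
  | succ i ih =>
    rw [pow_succ, pow_succ, Module.End.mul_eq_comp, Module.End.mul_eq_comp,
      ← LinearMap.comp_assoc, ih, LinearMap.comp_assoc, shiftSliceHom_comm,
      ← LinearMap.comp_assoc]

lemma shiftSliceHom_range_le (S : Fin n → Finset P) {M N : PersistenceModule K P}
    {ε : P} (f : PersistenceHom M (N.shift ε)) (a x : P)
    (hax : ∀ z : P, ε + (a + z) = x + z) (i : ℕ) :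
    (LinearMap.range (TMap (M.shift a) S ^ i)).map (shiftSliceHom S f a x hax)
      ≤ LinearMap.range (TMap (N.shift x) S ^ i) := by
  rw [← LinearMap.range_comp, shiftSliceHom_pow_comm]
  exact LinearMap.range_comp_le_range _ _

end AuxProof
section AuxProof2

open Module

variable {P : Type} [AddCommGroup P] [PartialOrder P] [IsOrderedAddMonoid P] {n : ℕ}

lemma trans_factor (S : Fin n → Finset P) {M N : PersistenceModule K P}
    {ε : P} (hε : 0 ≤ ε)
    (f : PersistenceHom M (N.shift ε)) (g : PersistenceHom N (M.shift ε))
    (hfg : IsInterleavingPair ε hε f g)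
    {x y : P} (hxy : x ≤ y)
    (hpt1 : ∀ z : P, ε + ((x - ε) + z) = x + z)
    (hpt2 : ∀ z : P, ε + (y + z) = (y + ε) + z)
    (hxy' : x - ε ≤ y + ε) :
    transMap M S hxy' =
      (shiftSliceHom S g y (y + ε) hpt2).comp
        ((transMap N S hxy).comp (shiftSliceHom S f (x - ε) x hpt1)) := by
  refine LinearMap.ext fun v => funext fun p => ?_
  show M.map (add_le_add_left hxy' p.2.1) (v p)
    = M.map (le_of_eq (hpt2 p.2.1)) (g.app (y + p.2.1)
        (N.map (add_le_add_left hxy p.2.1)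
          (N.map (le_of_eq (hpt1 p.2.1)) (f.app ((x - ε) + p.2.1) (v p)))))
  have hq : ε + ((y - ε) + p.2.1) = y + p.2.1 := by abel
  have hab : (x - ε) + p.2.1 ≤ (y - ε) + p.2.1 :=
    add_le_add_left (sub_le_sub_right hxy ε) p.2.1
  have s1 : N.map (add_le_add_left hxy p.2.1)
        (N.map (le_of_eq (hpt1 p.2.1)) (f.app ((x - ε) + p.2.1) (v p)))
      = N.map ((le_of_eq (hpt1 p.2.1)).trans (add_le_add_left hxy p.2.1))
          (f.app ((x - ε) + p.2.1) (v p)) :=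
    LinearMap.congr_fun (N.map_comp _ _) _
  have s2 : N.map ((le_of_eq (hpt1 p.2.1)).trans (add_le_add_left hxy p.2.1))
        (f.app ((x - ε) + p.2.1) (v p))
      = N.map (le_of_eq hq) (N.map (add_le_add_right hab ε)
          (f.app ((x - ε) + p.2.1) (v p))) :=
    (LinearMap.congr_fun (N.map_comp (add_le_add_right hab ε) (le_of_eq hq)) _).symm
  have s3 : N.map (add_le_add_right hab ε) (f.app ((x - ε) + p.2.1) (v p))
      = f.app ((y - ε) + p.2.1) (M.map hab (v p)) := by
    have := LinearMap.congr_fun (f.naturality hab) (v p)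
    exact this.symm
  have s4 : g.app (y + p.2.1)
        (N.map (le_of_eq hq) (f.app ((y - ε) + p.2.1) (M.map hab (v p))))
      = M.map (add_le_add_right (le_of_eq hq) ε)
          (g.app (ε + ((y - ε) + p.2.1)) (f.app ((y - ε) + p.2.1) (M.map hab (v p)))) := by
    have := LinearMap.congr_fun (g.naturality (le_of_eq hq))
      (f.app ((y - ε) + p.2.1) (M.map hab (v p)))
    exact this
  have s5 : g.app (ε + ((y - ε) + p.2.1)) (f.app ((y - ε) + p.2.1) (M.map hab (v p)))
      = M.map ((le_add_of_nonneg_left hε).trans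
          (add_le_add_right (le_add_of_nonneg_left hε) ε)) (M.map hab (v p)) := by
    have := LinearMap.congr_fun (hfg.1 ((y - ε) + p.2.1)) (M.map hab (v p))
    exact this
  rw [s1, s2, s3, s4, s5]
  have mm : ∀ {p q r : P} (h1 : p ≤ q) (h2 : q ≤ r) (w : M.V p),
      M.map h2 (M.map h1 w) = M.map (h1.trans h2) w :=
    fun h1 h2 w => LinearMap.congr_fun (M.map_comp h1 h2) w
  rw [mm, mm]
  exact (mm hab _ (v p)).symm

end AuxProof2
section AuxProof3

open Module

variable {P : Type} [AddCommGroup P] [PartialOrder P] [IsOrderedAddMonoid P] {n : ℕ}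

set_option synthInstance.maxHeartbeats 1000000 in
lemma jordanRk_erosion (S : Fin n → Finset P) {M N : PersistenceModule K P}
    (hM : M.pfd) (hN : N.pfd) (i : ℕ) {ε : P} (hε : 0 ≤ ε)
    (f : PersistenceHom M (N.shift ε)) (g : PersistenceHom N (M.shift ε))
    (hfg : IsInterleavingPair ε hε f g)
    {x y : P} (hxy : x ≤ y) :
    jordanRk M S i (x - ε) (y + ε) ≤ jordanRk N S i x y := by
  have hxy' : x - ε ≤ y + ε :=
    (sub_le_self x hε).trans (hxy.trans (le_add_of_nonneg_right hε))
  rw [jordanRk, jordanRk, dif_pos hxy', dif_pos hxy, Nat.cast_le]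
  have hpt1 : ∀ z : P, ε + ((x - ε) + z) = x + z := fun z => by abel
  have hpt2 : ∀ z : P, ε + (y + z) = (y + ε) + z := fun z => by abel
  haveI i1 : ∀ p : SliceIdx S, FiniteDimensional K ((M.shift (y + ε)).V p.2.1) :=
    fun p => hM _
  haveI i2 : ∀ p : SliceIdx S, FiniteDimensional K ((N.shift y).V p.2.1) :=
    fun p => hN _
  haveI : FiniteDimensional K (sliceSpace (M.shift (y + ε)) S) := Module.Finite.pi
  haveI : FiniteDimensional K (sliceSpace (N.shift y) S) := Module.Finite.pi
  rw [trans_factor S hε f g hfg hxy hpt1 hpt2 hxy']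
  rw [Submodule.map_comp, Submodule.map_comp]
  have h1 : (LinearMap.range (TMap (M.shift (x - ε)) S ^ i)).map
      (shiftSliceHom S f (x - ε) x hpt1)
      ≤ LinearMap.range (TMap (N.shift x) S ^ i) :=
    shiftSliceHom_range_le S f (x - ε) x hpt1 i
  calc finrank K ((((LinearMap.range (TMap (M.shift (x - ε)) S ^ i)).map
          (shiftSliceHom S f (x - ε) x hpt1)).map (transMap N S hxy)).map
          (shiftSliceHom S g y (y + ε) hpt2))
      ≤ finrank K (((LinearMap.range (TMap (N.shift x) S ^ i)).map
          (transMap N S hxy)).map (shiftSliceHom S g y (y + ε) hpt2)) :=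
        Submodule.finrank_mono (Submodule.map_mono (Submodule.map_mono h1))
    _ ≤ finrank K ((LinearMap.range (TMap (N.shift x) S ^ i)).map
          (transMap N S hxy)) :=
        Submodule.finrank_map_le _ _

end AuxProof3
section AuxProof4

lemma landscape_le_aux {R : Type} [CommRing R] [LinearOrder R] [IsStrictOrderedRing R] {d : ℕ} (toR : R → ℝ)
    (hadd : ∀ a b : R, toR (a + b) = toR a + toR b)
    (hpos : ∀ a : R, 0 ≤ a → 0 ≤ toR a)
    {F G : (Fin d → R) → (Fin d → R) → ℕ∞}
    (HG : ∀ a b : Fin d → R, ¬ a ≤ b → G a b = ⊤)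
    {ε : R} (hε : 0 ≤ ε)
    (hero : ∀ x y : Fin d → R, x ≤ y →
      F (x - fun _ => ε) (y + fun _ => ε) ≤ G x y)
    (k : ℕ) (x : Fin d → R) :
    landscape toR F k x ≤ landscape toR G k x + ENNReal.ofReal (toR ε) := by
  rw [landscape]
  refine sSup_le ?_
  rintro c ⟨δ, hδ, hP, rfl⟩
  have htε : 0 ≤ toR ε := hpos ε hε
  by_cases hle : δ ≤ toR ε
  · exact le_trans (ENNReal.ofReal_le_ofReal hle) le_add_self
  · push_neg at hle
    have hmem : ENNReal.ofReal (δ - toR ε) ≤ landscape toR G k x := by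
      rw [landscape]
      refine le_sSup ⟨δ - toR ε, by linarith, ?_, rfl⟩
      intro h hh
      by_cases hcmp : x - h ≤ x + h
      · have key : (k : ℕ∞) ≤ F ((x - h) - fun _ => ε) ((x + h) + fun _ => ε) := by
          have e1 : ((x - h) - fun _ => ε) = x - (h + fun _ => ε) := by
            funext j; exact sub_sub (x j) (h j) ε
          have e2 : ((x + h) + fun _ => ε) = x + (h + fun _ => ε) := by
            funext j; exact add_assoc (x j) (h j) ε
          rw [e1, e2]
          refine hP (h + fun _ => ε) fun j => ?_
          have h1 : ((h + fun _ => ε : Fin d → R)) j = h j + ε := rfl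
          rw [h1, hadd]
          have h2 := hh j
          calc |toR (h j) + toR ε| ≤ |toR (h j)| + |toR ε| := abs_add_le _ _
            _ ≤ (δ - toR ε) + toR ε := by rw [abs_of_nonneg htε]; linarith
            _ = δ := by ring
        exact key.trans (hero _ _ hcmp)
      · rw [HG _ _ hcmp]; exact le_top
    calc ENNReal.ofReal δ
        = ENNReal.ofReal (δ - toR ε) + ENNReal.ofReal (toR ε) := by
          rw [← ENNReal.ofReal_add (by linarith) htε, sub_add_cancel]
      _ ≤ landscape toR G k x + ENNReal.ofReal (toR ε) := add_le_add_left hmem _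

lemma landscapeDist_le_erosionDist_aux {R : Type} [CommRing R] [LinearOrder R] [IsStrictOrderedRing R] {d : ℕ}
    (toR : R → ℝ)
    (hadd : ∀ a b : R, toR (a + b) = toR a + toR b)
    (hpos : ∀ a : R, 0 ≤ a → 0 ≤ toR a)
    {F G : (Fin d → R) → (Fin d → R) → ℕ∞}
    (HF : ∀ a b : Fin d → R, ¬ a ≤ b → F a b = ⊤)
    (HG : ∀ a b : Fin d → R, ¬ a ≤ b → G a b = ⊤) :
    landscapeDist toR F G ≤ erosionDist toR F G := by
  rw [erosionDist]
  refine le_sInf ?_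
  rintro c ⟨ε, hε, hcond, rfl⟩
  rw [landscapeDist]
  refine iSup_le fun k => iSup_le fun x => max_le ?_ ?_
  · rw [tsub_le_iff_left]
    exact landscape_le_aux toR hadd hpos HG hε
      (fun a b hab => (hcond a b hab).1) k x
  · rw [tsub_le_iff_left]
    exact landscape_le_aux toR hadd hpos HF hε
      (fun a b hab => (hcond a b hab).2) k x

end AuxProof4
section AuxProof5

lemma erosion_le_interleaving_aux {R : Type} [CommRing R] [LinearOrder R] [IsStrictOrderedRing R] {d n : ℕ}
    (toR : R → ℝ) (S : Fin n → Finset (Fin d → R))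
    (M N : PersistenceModule K (Fin d → R)) (hM : M.pfd) (hN : N.pfd) (i : ℕ) :
    erosionDist toR (jordanRk M S i) (jordanRk N S i)
      ≤ interleavingDist toR M N := by
  rw [erosionDist, interleavingDist]
  refine sInf_le_sInf ?_
  rintro c ⟨ε, hε, ⟨f, g, hfg⟩, rfl⟩
  have hεp : (0 : Fin d → R) ≤ fun _ => ε := fun _ => hε
  exact ⟨ε, hε, fun x y hxy =>
    ⟨jordanRk_erosion S hM hN i hεp f g hfg hxy,
     jordanRk_erosion S hN hM i hεp g f ⟨hfg.2, hfg.1⟩ hxy⟩, rfl⟩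

lemma jordanRk_top {R : Type} [CommRing R] [LinearOrder R] [IsStrictOrderedRing R] {d n : ℕ}
    (S : Fin n → Finset (Fin d → R)) (M : PersistenceModule K (Fin d → R)) (i : ℕ)
    {a b : Fin d → R} (h : ¬ a ≤ b) : jordanRk M S i a b = ⊤ := by
  rw [jordanRk, dif_neg h]

end AuxProof5

/-- `d_L(M,N)_S ≤ d_E(M,N)_S ≤ d_I(M,N)` over `ℤ^d` and over `ℝ^d`. -/
theorem statement2 (K : Type) [Field K] (d n : ℕ) (hn : 2 ≤ n) :
    (∀ S : Fin n → Finset (Fin d → ℤ),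
      (∀ i j : Fin n, i ≠ j → Disjoint (S i) (S j)) →
      ∀ M N : PersistenceModule K (Fin d → ℤ), M.pfd → N.pfd →
        (⨆ i : Fin n, landscapeDist (fun z : ℤ => (z : ℝ))
            (jordanRk M S (i : ℕ)) (jordanRk N S (i : ℕ))) ≤
          (⨆ i : Fin n, erosionDist (fun z : ℤ => (z : ℝ))
            (jordanRk M S (i : ℕ)) (jordanRk N S (i : ℕ))) ∧
        (⨆ i : Fin n, erosionDist (fun z : ℤ => (z : ℝ))
            (jordanRk M S (i : ℕ)) (jordanRk N S (i : ℕ))) ≤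
          interleavingDist (fun z : ℤ => (z : ℝ)) M N) ∧
    (∀ S : Fin n → Finset (Fin d → ℝ),
      (∀ i j : Fin n, i ≠ j → Disjoint (S i) (S j)) →
      ∀ M N : PersistenceModule K (Fin d → ℝ), M.pfd → N.pfd →
        (⨆ i : Fin n, landscapeDist (id : ℝ → ℝ)
            (jordanRk M S (i : ℕ)) (jordanRk N S (i : ℕ))) ≤
          (⨆ i : Fin n, erosionDist (id : ℝ → ℝ)
            (jordanRk M S (i : ℕ)) (jordanRk N S (i : ℕ))) ∧
        (⨆ i : Fin n, erosionDist (id : ℝ → ℝ)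
            (jordanRk M S (i : ℕ)) (jordanRk N S (i : ℕ))) ≤
          interleavingDist (id : ℝ → ℝ) M N) := by
  constructor
  · intro S _ M N hM hN
    constructor
    · refine iSup_mono fun i => ?_
      exact landscapeDist_le_erosionDist_aux _
        (fun a b => by push_cast; ring)
        (fun a ha => by exact_mod_cast ha)
        (fun a b h => jordanRk_top S M _ h)
        (fun a b h => jordanRk_top S N _ h)
    · exact iSup_le fun i => erosion_le_interleaving_aux _ S M N hM hN _
  · intro S _ M N hM hN
    constructor
    · refine iSup_mono fun i => ?_
      exact landscapeDist_le_erosionDist_aux _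
        (fun a b => rfl)
        (fun a ha => ha)
        (fun a b h => jordanRk_top S M _ h)
        (fun a b h => jordanRk_top S N _ h)
    · exact iSup_le fun i => erosion_le_interleaving_aux _ S M N hM hN _

end
end

section
/- Let P = ℤ^d or ℝ^d with the product order, F a functor from pointwise finite-dimensional persistence modules over P to finite-dimensional K-vector spaces, M and N pointwise finite-dimensional persistence modules over P, and x ≤ x' ≤ y' ≤ y elements of P. Suppose there exist morphisms f : M → N[x'−x] and g : N → M[y−y'] such that g[x'−x] ∘ f = sh_M^{(y−x)−(y'−x')}. Then rk_{M,F}(x,y) ≤ rk_{N,F}(x',y'). -/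
open scoped Classical ENNReal

noncomputable section

variable {K : Type} [Field K]

section KeyAux

theorem PersistenceModule.map_map {P : Type} [PartialOrder P]
    (M : PersistenceModule K P) {a b c : P} (h1 : a ≤ b) (h2 : b ≤ c) (v : M.V a) :
    M.map h2 (M.map h1 v) = M.map (h1.trans h2) v :=
  LinearMap.congr_fun (M.map_comp h1 h2) v

theorem PersistenceHom.ext' {P : Type} [PartialOrder P]
    {M N : PersistenceModule K P} {f g : PersistenceHom M N}
    (h : ∀ x, f.app x = g.app x) : f = g := by
  cases f; cases g
  congr 1
  exact funext h

theorem lrank_comp_le_mid {U V W X : Type}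
    [AddCommGroup U] [Module K U] [AddCommGroup V] [Module K V]
    [AddCommGroup W] [Module K W] [AddCommGroup X] [Module K X]
    [FiniteDimensional K W]
    (a : U →ₗ[K] V) (m : V →ₗ[K] W) (c : W →ₗ[K] X) :
    lrank (c.comp (m.comp a)) ≤ lrank m := by
  have h1 : lrank (c.comp (m.comp a)) ≤ lrank (m.comp a) := by
    unfold lrank
    rw [LinearMap.range_comp (m.comp a) c]
    exact Submodule.finrank_map_le c (LinearMap.range (m.comp a))
  have h2 : lrank (m.comp a) ≤ lrank m := by
    unfold lrank
    exact Submodule.finrank_mono (LinearMap.range_comp_le_range a m)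
  exact h1.trans h2

theorem key_lemma {P : Type} [AddCommGroup P] [PartialOrder P] [IsOrderedAddMonoid P] (F : PMFunctor K P)
    (M N : PersistenceModule K P) (hM : M.pfd) (hN : N.pfd)
    (x x' y' y : P) (hxx' : x ≤ x') (hx'y' : x' ≤ y') (hy'y : y' ≤ y)
    (f : PersistenceHom M (N.shift (x' - x)))
    (g : PersistenceHom N (M.shift (y - y')))
    (hyp : ∀ z, (g.app (x' - x + z)).comp (f.app z) =
      M.map ((le_add_of_nonneg_left (sub_nonneg.mpr hxx')).trans
        (le_add_of_nonneg_left (sub_nonneg.mpr hy'y)) :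
          z ≤ y - y' + (x' - x + z))) :
    frk F M hM x y ≤ frk F N hN x' y' := by
  have hxy : x ≤ y := hxx'.trans (hx'y'.trans hy'y)
  rw [frk, frk, dif_pos hxy, dif_pos hx'y']
  have e1 : ∀ z : P, x' - x + (x + z) = x' + z := fun z => by abel
  have e2 : ∀ z : P, y - y' + (x' + (y' - x' + z)) = x + (y - x + z) := fun z => by abel
  -- the morphism α : M[x] → N[x']
  let α : PersistenceHom (M.shift x) (N.shift x') :=
  { app := fun z => (N.map (le_of_eq (e1 z))).comp (f.app (x + z))
    naturality := fun {z w} h => by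
      ext v
      have hf := LinearMap.congr_fun (f.naturality (add_le_add_right h x)) v
      erw [LinearMap.comp_apply, LinearMap.comp_apply] at hf
      show N.map _ (f.app (x + w) (M.map _ v)) = N.map _ (N.map _ (f.app (x + z) v))
      rw [hf]
      show N.map _ (N.map _ (f.app (x + z) v)) = _
      erw [N.map_map, N.map_map] }
  -- the morphism β : N[x'][y'-x'] → M[x][y-x]
  let β : PersistenceHom ((N.shift x').shift (y' - x')) ((M.shift x).shift (y - x)) :=
  { app := fun z => (M.map (le_of_eq (e2 z))).comp (g.app (x' + (y' - x' + z)))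
    naturality := fun {z w} h => by
      ext v
      have hg := LinearMap.congr_fun
        (g.naturality (add_le_add_right (add_le_add_right h (y' - x')) x')) v
      erw [LinearMap.comp_apply, LinearMap.comp_apply] at hg
      show M.map _ (g.app (x' + (y' - x' + w)) (N.map _ v)) =
        M.map _ (M.map _ (g.app (x' + (y' - x' + z)) v))
      rw [hg]
      show M.map _ (M.map _ (g.app (x' + (y' - x' + z)) v)) = _
      erw [M.map_map, M.map_map] }
  set σ : PersistenceHom (N.shift x') ((N.shift x').shift (y' - x')) :=
    shMor (N.shift x') (y' - x') (sub_nonneg.mpr hx'y') with hσ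
  have hcomp : shMor (M.shift x) (y - x) (sub_nonneg.mpr hxy) = β.comp (σ.comp α) := by
    apply PersistenceHom.ext'
    intro z
    ext v
    have hg := LinearMap.congr_fun
      (g.naturality ((le_of_eq (e1 z)).trans
        (add_le_add_right (le_add_of_nonneg_left (sub_nonneg.mpr hx'y')) x') :
          x' - x + (x + z) ≤ x' + (y' - x' + z))) (f.app (x + z) v)
    have hfg := LinearMap.congr_fun (hyp (x + z)) v
    erw [LinearMap.comp_apply, LinearMap.comp_apply] at hg
    erw [LinearMap.comp_apply] at hfg
    show M.map (add_le_add_right (le_add_of_nonneg_left (sub_nonneg.mpr hxy)) x) v =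
      M.map _ (g.app (x' + (y' - x' + z))
        (N.map _ (N.map (le_of_eq (e1 z)) (f.app (x + z) v))))
    erw [N.map_map, hg]
    show _ = M.map _ (M.map _ (g.app (x' - x + (x + z)) (f.app (x + z) v)))
    erw [M.map_map]
    erw [hfg, M.map_map]
  rw [hcomp]
  have hMx : (M.shift x).pfd := hM.shift x
  have hNx : (N.shift x').pfd := hN.shift x'
  have hNxy : ((N.shift x').shift (y' - x')).pfd := hNx.shift (y' - x')
  have hMxy : ((M.shift x).shift (y - x)).pfd := hMx.shift (y - x)
  rw [F.fmap_comp hMx hNxy hMxy (σ.comp α) β,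
    F.fmap_comp hMx hNx hNxy α σ]
  haveI := F.objFin ((N.shift x').shift (y' - x')) hNxy
  exact_mod_cast lrank_comp_le_mid (F.fmap hMx hNx α) (F.fmap hNx hNxy σ)
    (F.fmap hNxy hMxy β)

end KeyAux

/-- the key lemma for erosion-type stability, over `ℤ^d` and `ℝ^d`. -/
theorem statement4 (K : Type) [Field K] (d : ℕ) :
    (∀ (F : PMFunctor K (Fin d → ℤ)) (M N : PersistenceModule K (Fin d → ℤ))
        (hM : M.pfd) (hN : N.pfd) (x x' y' y : Fin d → ℤ)
        (hxx' : x ≤ x') (hx'y' : x' ≤ y') (hy'y : y' ≤ y)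
        (f : PersistenceHom M (N.shift (x' - x)))
        (g : PersistenceHom N (M.shift (y - y'))),
        (∀ z, (g.app (x' - x + z)).comp (f.app z) =
          M.map ((le_add_of_nonneg_left (sub_nonneg.mpr hxx')).trans
            (le_add_of_nonneg_left (sub_nonneg.mpr hy'y)) :
              z ≤ y - y' + (x' - x + z))) →
        frk F M hM x y ≤ frk F N hN x' y') ∧
    (∀ (F : PMFunctor K (Fin d → ℝ)) (M N : PersistenceModule K (Fin d → ℝ))
        (hM : M.pfd) (hN : N.pfd) (x x' y' y : Fin d → ℝ)
        (hxx' : x ≤ x') (hx'y' : x' ≤ y') (hy'y : y' ≤ y)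
        (f : PersistenceHom M (N.shift (x' - x)))
        (g : PersistenceHom N (M.shift (y - y'))),
        (∀ z, (g.app (x' - x + z)).comp (f.app z) =
          M.map ((le_add_of_nonneg_left (sub_nonneg.mpr hxx')).trans
            (le_add_of_nonneg_left (sub_nonneg.mpr hy'y)) :
              z ≤ y - y' + (x' - x + z))) →
        frk F M hM x y ≤ frk F N hN x' y') :=
  ⟨fun F M N hM hN x x' y' y hxx' hx'y' hy'y f g hfg =>
    key_lemma F M N hM hN x x' y' y hxx' hx'y' hy'y f g hfg,
   fun F M N hM hN x x' y' y hxx' hx'y' hy'y f g hfg =>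
    key_lemma F M N hM hN x x' y' y hxx' hx'y' hy'y f g hfg⟩

end
end

section
/- Let K be a field, d ≥ 1, G := [0,ℓ_1] × … × [0,ℓ_d] ⊆ ℤ^d a finite grid, n := ℓ_1 + … + ℓ_d + 1, and S := (S_1,…,S_n) the norm slicing S_i := {x ∈ G : x_1 + … + x_d = i−1}. Let M and N be pointwise finite-dimensional persistence modules over ℤ^d supported on G. Then rk^0_{M,S}(x,y) = rk^0_{N,S}(x,y) for all x ≤ y in ℤ^d if and only if rk_M(x,y) = rk_N(x,y) for all x ≤ y in ℤ^d. -/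
open scoped Classical ENNReal

noncomputable section

variable {K : Type} [Field K]

section Aux11

lemma lrank_eq_zero_of_subsingleton_left {V W : Type} [AddCommGroup V] [Module K V]
    [AddCommGroup W] [Module K W] [Subsingleton V] (f : V →ₗ[K] W) : lrank f = 0 := by
  have hf : f = 0 := by ext v; rw [Subsingleton.elim v 0]; simp
  rw [lrank, hf, LinearMap.range_zero, finrank_bot]

lemma lrank_eq_zero_of_subsingleton_right {V W : Type} [AddCommGroup V] [Module K V]
    [AddCommGroup W] [Module K W] [Subsingleton W] (f : V →ₗ[K] W) : lrank f = 0 := by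
  have hf : f = 0 := by ext v; exact Subsingleton.elim _ _
  rw [lrank, hf, LinearMap.range_zero, finrank_bot]

lemma lrank_map_congr {P : Type} [PartialOrder P] (M : PersistenceModule K P)
    {a a' b b' : P} (ha : a = a') (hb : b = b') (h : a ≤ b) (h' : a' ≤ b') :
    lrank (M.map h) = lrank (M.map h') := by
  subst ha; subst hb; rfl

/-- `Submodule.pi` over all coordinates is linearly equivalent to the product. -/
def piSubmoduleEquiv {ι : Type} {W : ι → Type} [∀ i, AddCommGroup (W i)]
    [∀ i, Module K (W i)] (p : ∀ i, Submodule K (W i)) :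
    (Submodule.pi Set.univ p) ≃ₗ[K] (∀ i, p i) where
  toFun v i := ⟨v.1 i, v.2 i trivial⟩
  map_add' u v := rfl
  map_smul' c v := rfl
  invFun u := ⟨fun i => (u i).1, fun i _ => (u i).2⟩
  left_inv v := rfl
  right_inv u := rfl

lemma lrank_pi {ι : Type} [Fintype ι] {V W : ι → Type}
    [∀ i, AddCommGroup (V i)] [∀ i, Module K (V i)]
    [∀ i, AddCommGroup (W i)] [∀ i, Module K (W i)]
    (hW : ∀ i, FiniteDimensional K (W i)) (f : ∀ i, V i →ₗ[K] W i) :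
    lrank (LinearMap.pi fun i => (f i).comp (LinearMap.proj i)) = ∑ i, lrank (f i) := by
  have hrange : LinearMap.range (LinearMap.pi fun i => (f i).comp (LinearMap.proj i))
      = Submodule.pi Set.univ (fun i => LinearMap.range (f i)) := by
    ext v
    simp only [LinearMap.mem_range, Submodule.mem_pi, Set.mem_univ, forall_true_left,
      LinearMap.pi_apply, LinearMap.comp_apply, LinearMap.proj_apply]
    constructor
    · rintro ⟨u, rfl⟩ i
      exact ⟨u i, rfl⟩
    · intro hv
      choose u hu using hv
      exact ⟨u, funext hu⟩
  haveI : ∀ i, FiniteDimensional K (LinearMap.range (f i)) := by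
    intro i
    haveI := hW i
    infer_instance
  rw [lrank, hrange,
    LinearEquiv.finrank_eq (piSubmoduleEquiv (fun i => LinearMap.range (f i))),
    Module.finrank_pi_fintype]
  rfl

end Aux11

section Grid11

variable {d : ℕ} (ℓ : Fin d → ℕ)

/-- The grid as a finset. -/
abbrev GfinF (d : ℕ) (ℓ : Fin d → ℕ) : Finset (Fin d → ℤ) :=
  Fintype.piFinset fun k => Finset.Icc (0 : ℤ) (ℓ k)

lemma mem_GfinF {z : Fin d → ℤ} :
    z ∈ GfinF d ℓ ↔ ∀ k, 0 ≤ z k ∧ z k ≤ (ℓ k : ℤ) := by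
  simp [Fintype.mem_piFinset, Finset.mem_Icc]

lemma mem_gridSet_iff {z : Fin d → ℤ} :
    z ∈ gridSet d ℓ ↔ ∀ k, 0 ≤ z k ∧ z k ≤ (ℓ k : ℤ) := Iff.rfl

lemma mem_GfinF_iff_gridSet {z : Fin d → ℤ} :
    z ∈ GfinF d ℓ ↔ z ∈ gridSet d ℓ := by
  rw [mem_GfinF, mem_gridSet_iff]

lemma GfinF_eq_biUnion {n : ℕ} (hn : n = (∑ k, ℓ k) + 1) :
    GfinF d ℓ = Finset.univ.biUnion (fun i : Fin n => gridSlice d ℓ (i : ℕ)) := by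
  ext z
  simp only [Finset.mem_biUnion, Finset.mem_univ, true_and]
  constructor
  · intro hz
    have hz' := (mem_GfinF ℓ).mp hz
    have h0 : 0 ≤ ∑ k, z k := Finset.sum_nonneg fun k _ => (hz' k).1
    have h1 : ∑ k, z k ≤ ((∑ k, ℓ k : ℕ) : ℤ) := by
      rw [Nat.cast_sum]
      exact Finset.sum_le_sum fun k _ => (hz' k).2
    refine ⟨⟨(∑ k, z k).toNat, by omega⟩, ?_⟩
    rw [gridSlice, Finset.mem_filter]
    exact ⟨hz, by simp; omega⟩
  · rintro ⟨i, hi⟩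
    exact Finset.mem_of_mem_filter z hi

lemma slice_sum {n : ℕ} (hn : n = (∑ k, ℓ k) + 1) (F : (Fin d → ℤ) → ℕ) :
    ∑ p : SliceIdx (fun i : Fin n => gridSlice d ℓ (i : ℕ)), F p.2.1
      = ∑ z ∈ GfinF d ℓ, F z := by
  classical
  have hdisj : ((Finset.univ : Finset (Fin n)) : Set (Fin n)).PairwiseDisjoint
      (fun i : Fin n => gridSlice d ℓ (i : ℕ)) := by
    intro i _ j _ hij
    simp only [Function.onFun]
    rw [Finset.disjoint_left]
    intro z hzi hzj
    rw [gridSlice, Finset.mem_filter] at hzi hzj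
    apply hij
    have : ((i : ℕ) : ℤ) = ((j : ℕ) : ℤ) := by rw [← hzi.2, ← hzj.2]
    exact Fin.ext (by exact_mod_cast this)
  rw [GfinF_eq_biUnion ℓ hn, Finset.sum_biUnion hdisj]
  rw [← Finset.univ_sigma_univ, Finset.sum_sigma]
  exact Finset.sum_congr rfl fun i _ => Finset.sum_coe_sort _ _

end Grid11

section Main11

variable {d : ℕ} {ℓ : Fin d → ℕ}

lemma jordanRk_zero_eq {n : ℕ} (hn : n = (∑ k, ℓ k) + 1)
    (L : PersistenceModule K (Fin d → ℤ)) (hL : L.pfd)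
    {x y : Fin d → ℤ} (h : x ≤ y) :
    jordanRk L (fun i : Fin n => gridSlice d ℓ (i : ℕ)) 0 x y
      = ((∑ z ∈ GfinF d ℓ, lrank (L.map (add_le_add_left h z)) : ℕ) : ℕ∞) := by
  rw [jordanRk, dif_pos h]
  congr 1
  have h1 : (TMap (L.shift x) (fun i : Fin n => gridSlice d ℓ (i : ℕ)) ^ 0)
      = LinearMap.id := by rw [pow_zero]; rfl
  rw [h1, LinearMap.range_id, Submodule.map_top]
  have h2 := lrank_pi (K := K) (ι := SliceIdx (fun i : Fin n => gridSlice d ℓ (i : ℕ)))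
    (V := fun p => (L.shift x).V p.2.1) (W := fun p => (L.shift y).V p.2.1)
    (fun p => hL (y + p.2.1)) (fun p => L.map (add_le_add_left h p.2.1))
  have h3 : transMap L (fun i : Fin n => gridSlice d ℓ (i : ℕ)) h
      = LinearMap.pi fun p => (L.map (add_le_add_left h p.2.1)).comp
          (LinearMap.proj p) := rfl
  rw [h3]
  exact h2.trans (slice_sum ℓ hn fun z => lrank (L.map (add_le_add_left h z)))

lemma rank_determined {n : ℕ} (hn : n = (∑ k, ℓ k) + 1)
    (M N : PersistenceModule K (Fin d → ℤ))
    (hMsupp : supportedOn M (gridSet d ℓ)) (hNsupp : supportedOn N (gridSet d ℓ))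
    (hR : ∀ (x y : Fin d → ℤ) (h : x ≤ y),
      ∑ z ∈ GfinF d ℓ, lrank (M.map (add_le_add_left h z))
        = ∑ z ∈ GfinF d ℓ, lrank (N.map (add_le_add_left h z))) :
    ∀ (a b : Fin d → ℤ) (h : a ≤ b), lrank (M.map h) = lrank (N.map h) := by
  have key : ∀ m : ℕ, ∀ a b (h : a ≤ b), a ∈ gridSet d ℓ → b ∈ gridSet d ℓ →
      (∑ k, ((ℓ k : ℤ) - a k)).toNat < m →
      lrank (M.map h) = lrank (N.map h) := by
    intro m
    induction m with
    | zero => intro a b h _ _ hm; exact absurd hm (Nat.not_lt_zero _)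
    | succ m ih =>
      intro a b h haG hbG hm
      have h0 : (0 : Fin d → ℤ) ∈ GfinF d ℓ := by
        rw [mem_GfinF]
        intro k
        simp
      have hkey := hR a b h
      rw [← Finset.add_sum_erase _ _ h0, ← Finset.add_sum_erase _ _ h0] at hkey
      have htail : ∑ z ∈ (GfinF d ℓ).erase 0, lrank (M.map (add_le_add_left h z))
          = ∑ z ∈ (GfinF d ℓ).erase 0, lrank (N.map (add_le_add_left h z)) := by
        refine Finset.sum_congr rfl fun z hz => ?_
        obtain ⟨hz0, hzG⟩ := Finset.mem_erase.mp hz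
        have hzG' := (mem_GfinF ℓ).mp hzG
        by_cases hazG : a + z ∈ gridSet d ℓ
        · by_cases hbzG : b + z ∈ gridSet d ℓ
          · refine ih (a + z) (b + z) (add_le_add_left h z) hazG hbzG ?_
            have hAB : ∑ k, ((ℓ k : ℤ) - a k)
                = ∑ k, ((ℓ k : ℤ) - (a + z) k) + ∑ k, z k := by
              rw [← Finset.sum_add_distrib]
              refine Finset.sum_congr rfl fun k _ => ?_
              have : (a + z) k = a k + z k := rfl
              rw [this]; ring
            have hB0 : 0 ≤ ∑ k, ((ℓ k : ℤ) - (a + z) k) :=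
              Finset.sum_nonneg fun k _ => sub_nonneg.mpr ((mem_gridSet_iff ℓ).mp hazG k).2
            have hCnn : ∀ k ∈ Finset.univ, (0 : ℤ) ≤ z k := fun k _ => (hzG' k).1
            have hC : 0 < ∑ k, z k := by
              rcases (Finset.sum_nonneg hCnn).lt_or_eq with h' | h'
              · exact h'
              · exfalso
                apply hz0
                funext k
                exact (Finset.sum_eq_zero_iff_of_nonneg hCnn).mp h'.symm k (Finset.mem_univ k)
            omega
          · haveI := hMsupp _ hbzG
            haveI := hNsupp _ hbzG
            rw [lrank_eq_zero_of_subsingleton_right, lrank_eq_zero_of_subsingleton_right]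
        · haveI := hMsupp _ hazG
          haveI := hNsupp _ hazG
          rw [lrank_eq_zero_of_subsingleton_left, lrank_eq_zero_of_subsingleton_left]
      rw [htail] at hkey
      have h00 := Nat.add_right_cancel hkey
      calc lrank (M.map h) = lrank (M.map (add_le_add_left h 0)) :=
            lrank_map_congr M (add_zero a).symm (add_zero b).symm _ _
        _ = lrank (N.map (add_le_add_left h 0)) := h00
        _ = lrank (N.map h) := lrank_map_congr N (add_zero a) (add_zero b) _ _
  intro a b h
  by_cases haG : a ∈ gridSet d ℓ
  · by_cases hbG : b ∈ gridSet d ℓ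
    · exact key _ a b h haG hbG (Nat.lt_succ_self _)
    · haveI := hMsupp _ hbG
      haveI := hNsupp _ hbG
      rw [lrank_eq_zero_of_subsingleton_right, lrank_eq_zero_of_subsingleton_right]
  · haveI := hMsupp _ haG
    haveI := hNsupp _ haG
    rw [lrank_eq_zero_of_subsingleton_left, lrank_eq_zero_of_subsingleton_left]

end Main11

/-- for modules supported on a grid with its norm slicing, the degree-`0`
Jordan rank invariants agree iff the classical rank invariants agree. -/
theorem statement11 (K : Type) [Field K] (d : ℕ) (hd : 1 ≤ d) (ℓ : Fin d → ℕ)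
    (n : ℕ) (hn : n = (∑ k, ℓ k) + 1)
    (M N : PersistenceModule K (Fin d → ℤ)) (hM : M.pfd) (hN : N.pfd)
    (hMsupp : supportedOn M (gridSet d ℓ)) (hNsupp : supportedOn N (gridSet d ℓ)) :
    (∀ x y : Fin d → ℤ,
        jordanRk M (fun i : Fin n => gridSlice d ℓ (i : ℕ)) 0 x y =
        jordanRk N (fun i : Fin n => gridSlice d ℓ (i : ℕ)) 0 x y) ↔
    (∀ x y : Fin d → ℤ, rankInv M x y = rankInv N x y) := by
  constructor
  · intro hJ x y
    by_cases h : x ≤ y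
    · rw [rankInv, rankInv, dif_pos h, dif_pos h]
      have hR : ∀ (x y : Fin d → ℤ) (h : x ≤ y),
          ∑ z ∈ GfinF d ℓ, lrank (M.map (add_le_add_left h z))
            = ∑ z ∈ GfinF d ℓ, lrank (N.map (add_le_add_left h z)) := by
        intro x' y' h'
        have := hJ x' y'
        rw [jordanRk_zero_eq hn M hM h', jordanRk_zero_eq hn N hN h'] at this
        exact_mod_cast this
      exact_mod_cast rank_determined hn M N hMsupp hNsupp hR x y h
    · rw [rankInv, rankInv, dif_neg h, dif_neg h]
  · intro hRk x y
    by_cases h : x ≤ y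
    · rw [jordanRk_zero_eq hn M hM h, jordanRk_zero_eq hn N hN h]
      congr 1
      refine Finset.sum_congr rfl fun z _ => ?_
      have := hRk (x + z) (y + z)
      rw [rankInv, rankInv, dif_pos (add_le_add_left h z),
        dif_pos (add_le_add_left h z)] at this
      exact_mod_cast this
    · rw [jordanRk, jordanRk, dif_neg h, dif_neg h]

end
end

section
/- Let K be a field, d ≥ 2, G := [0,ℓ_1] × … × [0,ℓ_d] ⊆ ℤ^d a finite grid with ℓ_k ≥ 1 for all k, n := ℓ_1 + … + ℓ_d + 1, and S := (S_1,…,S_n) the norm slicing S_i := {x ∈ G : x_1 + … + x_d = i−1}. Then there exist pointwise finite-dimensional persistence modules X and Y over ℤ^d supported on G such that rk_X = rk_Y but rk^1_{X,S}(0,0) ≠ rk^1_{Y,S}(0,0) (in fact one can achieve rk^1_{X,S}(0,0) = 1 and rk^1_{Y,S}(0,0) = 2); in particular X and Y are not isomorphic. -/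
open scoped Classical ENNReal

noncomputable section

variable {K : Type} [Field K]

/-! ### Auxiliary material for statement 12 -/

section Aux12

variable {K : Type} [Field K]

section IntvAux

variable {P : Type} [PartialOrder P]

def IsConvexSet (S : Set P) : Prop :=
  ∀ ⦃x y z : P⦄, x ≤ y → y ≤ z → x ∈ S → z ∈ S → y ∈ S

noncomputable def intvMap (S : Set P) {x y : P} (_ : x ≤ y) :
    (PLift (x ∈ S) → K) →ₗ[K] (PLift (y ∈ S) → K) :=
  LinearMap.pi fun _ => if hx : x ∈ S then LinearMap.proj (PLift.up hx) else 0

lemma intvMap_apply (S : Set P) {x y : P} (h : x ≤ y) (f : PLift (x ∈ S) → K)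
    (hy : PLift (y ∈ S)) :
    intvMap S h f hy = if hx : x ∈ S then f (PLift.up hx) else 0 := by
  by_cases hx : x ∈ S
  · simp [intvMap, dif_pos hx]
  · simp [intvMap, dif_neg hx]

noncomputable def intv (S : Set P) (hS : IsConvexSet S) : PersistenceModule K P where
  V z := PLift (z ∈ S) → K
  map h := intvMap S h
  map_refl x := by
    refine LinearMap.ext fun f => funext fun hy => ?_
    rcases hy with ⟨hy⟩
    show intvMap S (le_refl x) f ⟨hy⟩ = f ⟨hy⟩
    simp [intvMap_apply, dif_pos hy]
  map_comp {x y z} hxy hyz := by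
    refine LinearMap.ext fun f => funext fun hz => ?_
    rcases hz with ⟨hz⟩
    show intvMap S hyz (intvMap S hxy f) ⟨hz⟩ = intvMap S (hxy.trans hyz) f ⟨hz⟩
    by_cases hx : x ∈ S
    · have hy : y ∈ S := hS hxy hyz hx hz
      simp [intvMap_apply, dif_pos hx, dif_pos hy]
    · simp [intvMap_apply, dif_neg hx]

instance intvFin (S : Set P) (z : P) : FiniteDimensional K (PLift (z ∈ S) → K) :=
  inferInstance

lemma intv_subsingleton (S : Set P) {z : P} (hz : z ∉ S) :
    Subsingleton (PLift (z ∈ S) → K) :=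
  ⟨fun f _ => funext fun h => absurd h.down hz⟩

lemma lrank_intvMap (S : Set P) {x y : P} (h : x ≤ y) :
    lrank (K := K) (intvMap S h) = if x ∈ S ∧ y ∈ S then 1 else 0 := by
  by_cases hy : y ∈ S
  · by_cases hx : x ∈ S
    · rw [if_pos ⟨hx, hy⟩]
      have hsurj : LinearMap.range (intvMap (K := K) S h) = ⊤ := by
        rw [LinearMap.range_eq_top]
        intro g
        refine ⟨fun _ => g ⟨hy⟩, funext fun hy' => ?_⟩
        rw [intvMap_apply, dif_pos hx]
      have : Unique (PLift (y ∈ S)) := ⟨⟨⟨hy⟩⟩, fun a => by cases a; rfl⟩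
      rw [lrank, hsurj, finrank_top, Module.finrank_pi, Fintype.card_unique]
    · rw [if_neg (fun hc => hx hc.1)]
      have h0 : intvMap (K := K) S h = 0 := by
        refine LinearMap.ext fun f => funext fun hy' => ?_
        rw [intvMap_apply, dif_neg hx]
        rfl
      rw [lrank, h0, LinearMap.range_zero, finrank_bot]
  · rw [if_neg (fun hc => hy hc.2)]
    have := intv_subsingleton (K := K) S hy
    have : Subsingleton (LinearMap.range (intvMap (K := K) S h)) :=
      ⟨fun a b => Subtype.ext (Subsingleton.elim _ _)⟩
    exact Module.finrank_zero_of_subsingleton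

end IntvAux

section ProdAux

noncomputable def subProdEquiv {M N : Type} [AddCommGroup M] [Module K M]
    [AddCommGroup N] [Module K N] (p : Submodule K M) (q : Submodule K N) :
    (p.prod q) ≃ₗ[K] p × q where
  toFun z := (⟨z.1.1, z.2.1⟩, ⟨z.1.2, z.2.2⟩)
  invFun z := ⟨(z.1.1, z.2.1), ⟨z.1.2, z.2.2⟩⟩
  map_add' _ _ := rfl
  map_smul' _ _ := rfl
  left_inv _ := rfl
  right_inv _ := rfl

lemma range_prodMap' {V₁ V₂ W₁ W₂ : Type} [AddCommGroup V₁] [Module K V₁]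
    [AddCommGroup V₂] [Module K V₂] [AddCommGroup W₁] [Module K W₁]
    [AddCommGroup W₂] [Module K W₂] (f : V₁ →ₗ[K] W₁) (g : V₂ →ₗ[K] W₂) :
    LinearMap.range (f.prodMap g) = (LinearMap.range f).prod (LinearMap.range g) := by
  ext ⟨a, b⟩
  constructor
  · rintro ⟨⟨u, v⟩, h⟩
    cases h
    exact ⟨⟨u, rfl⟩, ⟨v, rfl⟩⟩
  · rintro ⟨⟨u, hu⟩, ⟨v, hv⟩⟩
    exact ⟨(u, v), by simp [hu, hv]⟩

lemma lrank_prodMap {V₁ V₂ W₁ W₂ : Type} [AddCommGroup V₁] [Module K V₁]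
    [AddCommGroup V₂] [Module K V₂] [AddCommGroup W₁] [Module K W₁]
    [AddCommGroup W₂] [Module K W₂] [FiniteDimensional K W₁] [FiniteDimensional K W₂]
    (f : V₁ →ₗ[K] W₁) (g : V₂ →ₗ[K] W₂) :
    lrank (f.prodMap g) = lrank f + lrank g := by
  rw [lrank, range_prodMap', (subProdEquiv _ _).finrank_eq, Module.finrank_prod]
  rfl

end ProdAux

section GeomAux

variable {d : ℕ}

def sgl (k : Fin d) : Fin d → ℤ := Pi.single k 1

variable (k₀ k₁ : Fin d)

lemma mem_gridSlice {ℓ : Fin d → ℕ} {i : ℕ} {x : Fin d → ℤ} :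
    x ∈ gridSlice d ℓ i ↔ ((∀ k, 0 ≤ x k ∧ x k ≤ (ℓ k : ℤ)) ∧ (∑ k, x k) = (i : ℤ)) := by
  simp [gridSlice, Fintype.mem_piFinset, Finset.mem_Icc]

lemma single_apply' (j : Fin d) : sgl k₀ j = if j = k₀ then 1 else 0 := by
  rw [sgl, Pi.single_apply]

lemma single_nonneg' : (0 : Fin d → ℤ) ≤ sgl k₀ := by
  intro j; rw [single_apply']; positivity

lemma single_ne_zero' : sgl k₀ ≠ 0 := by
  intro h
  have := congrFun h k₀
  rw [single_apply'] at this
  simp at this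

lemma not_single_le_zero : ¬ sgl k₀ ≤ 0 := by
  intro h
  have : sgl k₀ k₀ ≤ 0 := h k₀
  rw [single_apply'] at this
  simp at this

lemma single_ne_single (hk : k₀ ≠ k₁) : sgl k₀ ≠ sgl k₁ := by
  intro h
  have := congrFun h k₀
  rw [single_apply', single_apply'] at this
  simp [hk] at this

lemma not_single_le_single (hk : k₀ ≠ k₁) :
    ¬ sgl k₀ ≤ sgl k₁ := by
  intro h
  have := h k₀
  rw [single_apply', single_apply'] at this
  simp [hk] at this

lemma le_single_cases {y : Fin d → ℤ} (h0 : 0 ≤ y) (h1 : y ≤ sgl k₀) :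
    y = 0 ∨ y = sgl k₀ := by
  by_cases hc : y k₀ = 0
  · left
    funext j
    have a : (0:ℤ) ≤ y j := h0 j
    have b : y j ≤ sgl k₀ j := h1 j
    rw [single_apply'] at b
    show y j = (0:ℤ)
    by_cases hj : j = k₀
    · subst hj; exact hc
    · rw [if_neg hj] at b; omega
  · right
    funext j
    have a : (0:ℤ) ≤ y j := h0 j
    have b : y j ≤ sgl k₀ j := h1 j
    have hc2 : (0:ℤ) ≤ y k₀ := h0 k₀
    rw [single_apply'] at b ⊢
    by_cases hj : j = k₀
    · subst hj
      rw [if_pos rfl] at b ⊢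
      omega
    · rw [if_neg hj] at b ⊢
      omega

lemma le_zero_cases {y : Fin d → ℤ} (h0 : 0 ≤ y) (h1 : y ≤ 0) : y = 0 :=
  le_antisymm h1 h0

lemma convex_singleton0 : IsConvexSet ({0} : Set (Fin d → ℤ)) := by
  rintro x y z hxy hyz (rfl : x = 0) (rfl : z = 0)
  exact le_zero_cases hxy hyz

lemma convex_pair : IsConvexSet ({0, sgl k₀} : Set (Fin d → ℤ)) := by
  rintro x y z hxy hyz hx hz
  rcases hz with rfl | rfl
  · rcases hx with rfl | rfl
    · exact Or.inl (le_zero_cases hxy hyz)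
    · exact absurd (hxy.trans hyz) (not_single_le_zero k₀)
  · rcases hx with rfl | rfl
    · exact le_single_cases k₀ hxy hyz
    · exact Or.inr (le_antisymm hyz hxy)

lemma convex_triple (hk : k₀ ≠ k₁) :
    IsConvexSet ({0, sgl k₀, sgl k₁} : Set (Fin d → ℤ)) := by
  rintro x y z hxy hyz hx hz
  rcases hz with rfl | rfl | rfl
  · rcases hx with rfl | rfl | rfl
    · exact Or.inl (le_zero_cases hxy hyz)
    · exact absurd (hxy.trans hyz) (not_single_le_zero k₀)
    · exact absurd (hxy.trans hyz) (not_single_le_zero k₁)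
  · rcases hx with rfl | rfl | rfl
    · rcases le_single_cases k₀ hxy hyz with h | h
      · exact Or.inl h
      · exact Or.inr (Or.inl h)
    · exact Or.inr (Or.inl (le_antisymm hyz hxy))
    · exact absurd (hxy.trans hyz) (not_single_le_single k₁ k₀ hk.symm)
  · rcases hx with rfl | rfl | rfl
    · rcases le_single_cases k₁ hxy hyz with h | h
      · exact Or.inl h
      · exact Or.inr (Or.inr h)
    · exact absurd (hxy.trans hyz) (not_single_le_single k₀ k₁ hk)
    · exact Or.inr (Or.inr (le_antisymm hyz hxy))

lemma zero_mem_slice (ℓ : Fin d → ℕ) : (0 : Fin d → ℤ) ∈ gridSlice d ℓ 0 := by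
  rw [mem_gridSlice]
  exact ⟨fun k => ⟨le_refl _, Int.natCast_nonneg _⟩, by simp⟩

lemma sum_single : (∑ j, sgl k₀ j) = 1 := by
  simp [sgl, Finset.sum_pi_single']

lemma single_mem_slice (ℓ : Fin d → ℕ) (hℓ : ∀ k, 1 ≤ ℓ k) :
    sgl k₀ ∈ gridSlice d ℓ 1 := by
  rw [mem_gridSlice]
  refine ⟨fun k => ?_, by rw [sum_single]; simp⟩
  rw [single_apply']
  by_cases hj : k = k₀
  · rw [if_pos hj]
    refine ⟨by norm_num, ?_⟩
    have := hℓ k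
    exact_mod_cast this
  · rw [if_neg hj]
    exact ⟨le_refl _, Int.natCast_nonneg _⟩

lemma slice_zero_eq {ℓ : Fin d → ℕ} {x : Fin d → ℤ} (hx : x ∈ gridSlice d ℓ 0) :
    x = 0 := by
  rw [mem_gridSlice] at hx
  have := (Finset.sum_eq_zero_iff_of_nonneg (fun i _ => (hx.1 i).1)).1 (by simpa using hx.2)
  funext j
  exact this j (Finset.mem_univ j)

lemma slice_mem_sum {ℓ : Fin d → ℕ} {i : ℕ} {x : Fin d → ℤ} (hx : x ∈ gridSlice d ℓ i) :
    (∑ k, x k) = (i : ℤ) := (mem_gridSlice.1 hx).2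

lemma zero_mem_grid (ℓ : Fin d → ℕ) : (0 : Fin d → ℤ) ∈ gridSet d ℓ :=
  fun _ => ⟨le_refl _, Int.natCast_nonneg _⟩

lemma single_mem_grid (ℓ : Fin d → ℕ) (hℓ : ∀ k, 1 ≤ ℓ k) :
    sgl k₀ ∈ gridSet d ℓ := by
  intro k
  rw [single_apply']
  by_cases hj : k = k₀
  · rw [if_pos hj]
    refine ⟨by norm_num, ?_⟩
    have := hℓ k
    exact_mod_cast this
  · rw [if_neg hj]
    exact ⟨le_refl _, Int.natCast_nonneg _⟩

end GeomAux

section KeyAux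

variable {d : ℕ}

lemma transMap_zero_eq_id (M : PersistenceModule K (Fin d → ℤ)) {n : ℕ}
    (S : Fin n → Finset (Fin d → ℤ)) :
    transMap M S (le_refl (0 : Fin d → ℤ)) = LinearMap.id := by
  refine LinearMap.ext fun f => funext fun p => ?_
  show (M.map (add_le_add_left (le_refl (0 : Fin d → ℤ)) p.2.1)) (f p) = f p
  rw [show (M.map (add_le_add_left (le_refl (0 : Fin d → ℤ)) p.2.1)) = LinearMap.id from
    M.map_refl _]
  rfl

lemma jordanRk_one_zero (M : PersistenceModule K (Fin d → ℤ)) {n : ℕ}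
    (S : Fin n → Finset (Fin d → ℤ)) :
    jordanRk M S 1 0 0 = (lrank (TMap (M.shift 0) S) : ℕ∞) := by
  rw [jordanRk, dif_pos (le_refl (0 : Fin d → ℤ)), pow_one,
    transMap_zero_eq_id, Submodule.map_id]
  rfl

/-- The key structural lemma: for a module supported on `{0, e₁, e₂}`, the rank of
`T_{M,S}` for the norm slicing `S` equals the rank of `(M_{e₁,0}, M_{e₂,0})`. -/
lemma lrank_TMap_eq (M : PersistenceModule K (Fin d → ℤ)) {n : ℕ} (h0n : 0 < n)
    (h1n : 1 < n) (ℓ : Fin d → ℕ) (hℓ : ∀ k, 1 ≤ ℓ k) (k₀ k₁ : Fin d) (hk : k₀ ≠ k₁)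
    (hsupp : ∀ z : Fin d → ℤ, z ≠ 0 → z ≠ sgl k₀ → z ≠ sgl k₁ → Subsingleton (M.V z))
    (h₁ : (0 : Fin d → ℤ) ≤ sgl k₀) (h₂ : (0 : Fin d → ℤ) ≤ sgl k₁) :
    lrank (TMap M (fun i : Fin n => gridSlice d ℓ (i : ℕ))) =
      lrank ((M.map h₁).prod (M.map h₂)) := by
  set S : Fin n → Finset (Fin d → ℤ) := fun i => gridSlice d ℓ (i : ℕ) with hSdef
  have hq₀mem : (0 : Fin d → ℤ) ∈ S ⟨0, h0n⟩ := zero_mem_slice ℓ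
  have hp₁mem : sgl k₀ ∈ S ⟨1, h1n⟩ := single_mem_slice k₀ ℓ hℓ
  have hp₂mem : sgl k₁ ∈ S ⟨1, h1n⟩ := single_mem_slice k₁ ℓ hℓ
  set q₀ : SliceIdx S := ⟨⟨0, h0n⟩, ⟨0, hq₀mem⟩⟩ with hq₀def
  set p₁ : SliceIdx S := ⟨⟨1, h1n⟩, ⟨sgl k₀, hp₁mem⟩⟩ with hp₁def
  set p₂ : SliceIdx S := ⟨⟨1, h1n⟩, ⟨sgl k₁, hp₂mem⟩⟩ with hp₂def
  have hp₁p₂ : p₁ ≠ p₂ := by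
    intro h
    exact single_ne_single k₀ k₁ hk (congrArg (fun r : SliceIdx S => r.2.1) h)
  set g : M.V 0 →ₗ[K] M.V (sgl k₀) × M.V (sgl k₁) := (M.map h₁).prod (M.map h₂) with hgdef
  set emb : (M.V (sgl k₀) × M.V (sgl k₁)) →ₗ[K] sliceSpace M S :=
    (LinearMap.single K (fun p : SliceIdx S => M.V p.2.1) p₁).comp
        (LinearMap.fst K (M.V (sgl k₀)) (M.V (sgl k₁))) +
      (LinearMap.single K (fun p : SliceIdx S => M.V p.2.1) p₂).comp
        (LinearMap.snd K (M.V (sgl k₀)) (M.V (sgl k₁))) with hembdef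
  have hemb_apply : ∀ (u : M.V (sgl k₀)) (v : M.V (sgl k₁)) (p : SliceIdx S),
      emb (u, v) p = Pi.single (M := fun p : SliceIdx S => M.V p.2.1) p₁ u p +
        Pi.single (M := fun p : SliceIdx S => M.V p.2.1) p₂ v p := by
    intro u v p
    rfl
  set π : sliceSpace M S →ₗ[K] M.V 0 :=
    (LinearMap.proj q₀ : sliceSpace M S →ₗ[K] M.V q₀.2.1) with hπdef
  -- the main computation
  have hT : TMap M S = (emb.comp g).comp π := by
    refine LinearMap.ext fun f => funext fun p => ?_
    obtain ⟨i, x, hx⟩ := p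
    have hLHS : TMap M S f ⟨i, x, hx⟩ = ∑ q : SliceIdx S,
        (if h : (q.1 : ℕ) + 1 = (i : ℕ) ∧ q.2.1 ≤ x then
          (M.map h.2).comp (LinearMap.proj q) else 0) f := by
      rw [TMap]
      rw [LinearMap.pi_apply]
      rw [LinearMap.sum_apply]
    have hRHS : ((emb.comp g).comp π) f ⟨i, x, hx⟩ =
        Pi.single (M := fun p : SliceIdx S => M.V p.2.1) p₁ (M.map h₁ (f q₀)) ⟨i, x, hx⟩ +
          Pi.single (M := fun p : SliceIdx S => M.V p.2.1) p₂ (M.map h₂ (f q₀)) ⟨i, x, hx⟩ :=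
      rfl
    rw [hLHS, hRHS]
    by_cases hx0 : x = 0
    · subst hx0
      have hi0 : (i : ℕ) = 0 := by
        have := slice_mem_sum hx
        simp at this
        exact_mod_cast this.symm
      have hne1 : (⟨i, ⟨0, hx⟩⟩ : SliceIdx S) ≠ p₁ := by
        intro h
        exact single_ne_zero' k₀ (congrArg (fun r : SliceIdx S => r.2.1) h).symm
      have hne2 : (⟨i, ⟨0, hx⟩⟩ : SliceIdx S) ≠ p₂ := by
        intro h
        exact single_ne_zero' k₁ (congrArg (fun r : SliceIdx S => r.2.1) h).symm
      rw [Pi.single_eq_of_ne hne1, Pi.single_eq_of_ne hne2]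
      rw [Finset.sum_eq_zero, add_zero]
      intro q _
      rw [dif_neg, LinearMap.zero_apply]
      rintro ⟨hq1, -⟩
      omega
    · by_cases hx1 : x = sgl k₀
      · subst hx1
        have hi1 : i = ⟨1, h1n⟩ := by
          refine Fin.ext ?_
          have := slice_mem_sum hx
          rw [sum_single] at this
          exact_mod_cast this.symm
        subst hi1
        have e1 : Pi.single (M := fun p : SliceIdx S => M.V p.2.1) p₁ (M.map h₁ (f q₀))
            ⟨⟨1, h1n⟩, ⟨sgl k₀, hx⟩⟩ = M.map h₁ (f q₀) := Pi.single_eq_same _ _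
        have hne2 : (⟨⟨1, h1n⟩, ⟨sgl k₀, hx⟩⟩ : SliceIdx S) ≠ p₂ := by
          intro h
          exact single_ne_single k₀ k₁ hk (congrArg (fun r : SliceIdx S => r.2.1) h)
        have e2 : Pi.single (M := fun p : SliceIdx S => M.V p.2.1) p₂ (M.map h₂ (f q₀))
            ⟨⟨1, h1n⟩, ⟨sgl k₀, hx⟩⟩ = 0 := Pi.single_eq_of_ne hne2 _
        rw [e1, e2, add_zero]
        rw [Finset.sum_eq_single q₀]
        · rw [dif_pos ⟨rfl, h₁⟩]
          rfl
        · intro q _ hq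
          by_cases hcond : (q.1 : ℕ) + 1 = ((⟨1, h1n⟩ : Fin n) : ℕ) ∧ q.2.1 ≤ sgl k₀
          · exfalso
            apply hq
            obtain ⟨qi, qx, hqx⟩ := q
            have hqi0 : (qi : ℕ) = 0 := by
              have := hcond.1
              simpa using this
            have hqi : qi = ⟨0, h0n⟩ := Fin.ext hqi0
            subst hqi
            have hqx0 : qx = 0 := slice_zero_eq hqx
            subst hqx0
            rfl
          · rw [dif_neg hcond, LinearMap.zero_apply]
        · intro h
          exact absurd (Finset.mem_univ q₀) h
      · by_cases hx2 : x = sgl k₁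
        · subst hx2
          have hi1 : i = ⟨1, h1n⟩ := by
            refine Fin.ext ?_
            have := slice_mem_sum hx
            rw [sum_single] at this
            exact_mod_cast this.symm
          subst hi1
          have e2 : Pi.single (M := fun p : SliceIdx S => M.V p.2.1) p₂ (M.map h₂ (f q₀))
              ⟨⟨1, h1n⟩, ⟨sgl k₁, hx⟩⟩ = M.map h₂ (f q₀) := Pi.single_eq_same _ _
          have hne1 : (⟨⟨1, h1n⟩, ⟨sgl k₁, hx⟩⟩ : SliceIdx S) ≠ p₁ := by
            intro h
            exact single_ne_single k₁ k₀ hk.symm (congrArg (fun r : SliceIdx S => r.2.1) h)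
          have e1 : Pi.single (M := fun p : SliceIdx S => M.V p.2.1) p₁ (M.map h₁ (f q₀))
              ⟨⟨1, h1n⟩, ⟨sgl k₁, hx⟩⟩ = 0 := Pi.single_eq_of_ne hne1 _
          rw [e1, e2, zero_add]
          rw [Finset.sum_eq_single q₀]
          · rw [dif_pos ⟨rfl, h₂⟩]
            rfl
          · intro q _ hq
            by_cases hcond : (q.1 : ℕ) + 1 = ((⟨1, h1n⟩ : Fin n) : ℕ) ∧ q.2.1 ≤ sgl k₁
            · exfalso
              apply hq
              obtain ⟨qi, qx, hqx⟩ := q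
              have hqi0 : (qi : ℕ) = 0 := by
                have := hcond.1
                simpa using this
              have hqi : qi = ⟨0, h0n⟩ := Fin.ext hqi0
              subst hqi
              have hqx0 : qx = 0 := slice_zero_eq hqx
              subst hqx0
              rfl
            · rw [dif_neg hcond, LinearMap.zero_apply]
          · intro h
            exact absurd (Finset.mem_univ q₀) h
        · haveI : Subsingleton (M.V x) := hsupp x hx0 hx1 hx2
          exact Subsingleton.elim _ _
  -- surjectivity of π
  have hπtop : LinearMap.range π = ⊤ := by
    rw [LinearMap.range_eq_top]
    intro v
    refine ⟨Pi.single (M := fun p : SliceIdx S => M.V p.2.1) q₀ v, ?_⟩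
    show Pi.single (M := fun p : SliceIdx S => M.V p.2.1) q₀ v q₀ = v
    rw [Pi.single_eq_same]
  -- injectivity of emb
  have hembinj : Function.Injective emb := by
    rw [← LinearMap.ker_eq_bot, LinearMap.ker_eq_bot']
    rintro ⟨u, v⟩ h
    have h1' := congrFun h p₁
    have h2' := congrFun h p₂
    rw [hemb_apply u v p₁] at h1'
    rw [hemb_apply u v p₂] at h2'
    rw [Pi.single_eq_same, Pi.single_eq_of_ne hp₁p₂] at h1'
    rw [Pi.single_eq_same, Pi.single_eq_of_ne (Ne.symm hp₁p₂)] at h2'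
    have hu : u = 0 := by simpa using h1'
    have hv : v = 0 := by simpa using h2'
    rw [hu, hv]
    rfl
  rw [lrank, hT, LinearMap.range_comp_of_range_eq_top _ hπtop, LinearMap.range_comp,
    ← (Submodule.equivMapOfInjective emb hembinj (LinearMap.range g)).finrank_eq]
  rfl

end KeyAux

end Aux12


section Mods12

variable {K : Type} [Field K] {d : ℕ}

noncomputable def XMod (k₀ k₁ : Fin d) (hk : k₀ ≠ k₁) :
    PersistenceModule K (Fin d → ℤ) :=
  (intv ({0, sgl k₀, sgl k₁} : Set (Fin d → ℤ)) (convex_triple k₀ k₁ hk)).dsum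
    (intv ({0} : Set (Fin d → ℤ)) convex_singleton0)

noncomputable def YMod (k₀ k₁ : Fin d) :
    PersistenceModule K (Fin d → ℤ) :=
  (intv ({0, sgl k₀} : Set (Fin d → ℤ)) (convex_pair k₀)).dsum
    (intv ({0, sgl k₁} : Set (Fin d → ℤ)) (convex_pair k₁))

variable (k₀ k₁ : Fin d) (hk : k₀ ≠ k₁)

lemma XMod_pfd : (XMod (K := K) k₀ k₁ hk).pfd := fun x =>
  (inferInstance : FiniteDimensional K
    ((PLift (x ∈ ({0, sgl k₀, sgl k₁} : Set (Fin d → ℤ))) → K) ×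
      (PLift (x ∈ ({0} : Set (Fin d → ℤ))) → K)))

lemma YMod_pfd : (YMod (K := K) k₀ k₁).pfd := fun x =>
  (inferInstance : FiniteDimensional K
    ((PLift (x ∈ ({0, sgl k₀} : Set (Fin d → ℤ))) → K) ×
      (PLift (x ∈ ({0, sgl k₁} : Set (Fin d → ℤ))) → K)))

lemma XMod_supported (ℓ : Fin d → ℕ) (hℓ : ∀ k, 1 ≤ ℓ k) :
    supportedOn (XMod (K := K) k₀ k₁ hk) (gridSet d ℓ) := by
  intro z hz
  have hz0 : z ≠ 0 := by rintro rfl; exact hz (zero_mem_grid ℓ)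
  have hzk0 : z ≠ sgl k₀ := by rintro rfl; exact hz (single_mem_grid k₀ ℓ hℓ)
  have hzk1 : z ≠ sgl k₁ := by rintro rfl; exact hz (single_mem_grid k₁ ℓ hℓ)
  have h1 : z ∉ ({0, sgl k₀, sgl k₁} : Set (Fin d → ℤ)) := by
    rintro (rfl | rfl | rfl) <;> simp_all
  have h2 : z ∉ ({0} : Set (Fin d → ℤ)) := by
    rintro (rfl : z = 0); exact hz0 rfl
  haveI := intv_subsingleton (K := K) ({0, sgl k₀, sgl k₁} : Set (Fin d → ℤ)) h1
  haveI := intv_subsingleton (K := K) ({0} : Set (Fin d → ℤ)) h2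
  show Subsingleton ((PLift (z ∈ ({0, sgl k₀, sgl k₁} : Set (Fin d → ℤ))) → K) ×
    (PLift (z ∈ ({0} : Set (Fin d → ℤ))) → K))
  infer_instance

lemma YMod_supported (ℓ : Fin d → ℕ) (hℓ : ∀ k, 1 ≤ ℓ k) :
    supportedOn (YMod (K := K) k₀ k₁) (gridSet d ℓ) := by
  intro z hz
  have hz0 : z ≠ 0 := by rintro rfl; exact hz (zero_mem_grid ℓ)
  have hzk0 : z ≠ sgl k₀ := by rintro rfl; exact hz (single_mem_grid k₀ ℓ hℓ)
  have hzk1 : z ≠ sgl k₁ := by rintro rfl; exact hz (single_mem_grid k₁ ℓ hℓ)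
  have h1 : z ∉ ({0, sgl k₀} : Set (Fin d → ℤ)) := by
    rintro (rfl | rfl) <;> simp_all
  have h2 : z ∉ ({0, sgl k₁} : Set (Fin d → ℤ)) := by
    rintro (rfl | rfl) <;> simp_all
  haveI := intv_subsingleton (K := K) ({0, sgl k₀} : Set (Fin d → ℤ)) h1
  haveI := intv_subsingleton (K := K) ({0, sgl k₁} : Set (Fin d → ℤ)) h2
  show Subsingleton ((PLift (z ∈ ({0, sgl k₀} : Set (Fin d → ℤ))) → K) ×
    (PLift (z ∈ ({0, sgl k₁} : Set (Fin d → ℤ))) → K))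
  infer_instance

lemma rankInv_XY (x y : Fin d → ℤ) :
    rankInv (XMod (K := K) k₀ k₁ hk) x y = rankInv (YMod (K := K) k₀ k₁) x y := by
  rw [rankInv, rankInv]
  by_cases h : x ≤ y
  · rw [dif_pos h, dif_pos h]
    congr 1
    show lrank ((intvMap (K := K) ({0, sgl k₀, sgl k₁} : Set (Fin d → ℤ)) h).prodMap
        (intvMap ({0} : Set (Fin d → ℤ)) h)) =
      lrank ((intvMap (K := K) ({0, sgl k₀} : Set (Fin d → ℤ)) h).prodMap
        (intvMap ({0, sgl k₁} : Set (Fin d → ℤ)) h))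
    rw [lrank_prodMap, lrank_prodMap, lrank_intvMap, lrank_intvMap,
      lrank_intvMap, lrank_intvMap]
    have hk01 := single_ne_single k₀ k₁ hk
    have hk10 := single_ne_single k₁ k₀ hk.symm
    have hz0 := single_ne_zero' k₀
    have hz1 := single_ne_zero' k₁
    by_cases hy0 : y = 0
    · subst hy0
      by_cases hx0 : x = 0
      · subst hx0; simp
      · have hxk0 : x ≠ sgl k₀ := by rintro rfl; exact not_single_le_zero k₀ h
        have hxk1 : x ≠ sgl k₁ := by rintro rfl; exact not_single_le_zero k₁ h
        simp [Set.mem_insert_iff, Set.mem_singleton_iff, hx0, hxk0, hxk1]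
    · by_cases hyk0 : y = sgl k₀
      · subst hyk0
        by_cases hx0 : x = 0
        · subst hx0
          simp [Set.mem_insert_iff, Set.mem_singleton_iff, hz0, hk01]
        · by_cases hxk0 : x = sgl k₀
          · subst hxk0
            simp [Set.mem_insert_iff, Set.mem_singleton_iff, hz0, hk01]
          · have hxk1 : x ≠ sgl k₁ := by
              rintro rfl; exact not_single_le_single k₁ k₀ hk.symm h
            simp [Set.mem_insert_iff, Set.mem_singleton_iff, hx0, hxk0, hxk1]
      · by_cases hyk1 : y = sgl k₁
        · subst hyk1
          by_cases hx0 : x = 0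
          · subst hx0
            simp [Set.mem_insert_iff, Set.mem_singleton_iff, hz1, hk10]
          · by_cases hxk1 : x = sgl k₁
            · subst hxk1
              simp [Set.mem_insert_iff, Set.mem_singleton_iff, hz1, hk10]
            · have hxk0 : x ≠ sgl k₀ := by
                rintro rfl; exact not_single_le_single k₀ k₁ hk h
              simp [Set.mem_insert_iff, Set.mem_singleton_iff, hx0, hxk0, hxk1]
        · simp [Set.mem_insert_iff, Set.mem_singleton_iff, hy0, hyk0, hyk1]
  · rw [dif_neg h, dif_neg h]

lemma lrank_gX (h₁ : (0 : Fin d → ℤ) ≤ sgl k₀) (h₂ : (0 : Fin d → ℤ) ≤ sgl k₁) :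
    lrank ((((XMod (K := K) k₀ k₁ hk).shift 0).map h₁).prod
      (((XMod (K := K) k₀ k₁ hk).shift 0).map h₂)) = 1 := by
  set T₀ : Set (Fin d → ℤ) := {0, sgl k₀, sgl k₁} with hT₀
  set Z : Set (Fin d → ℤ) := {0} with hZ
  have h00T : ((0 : Fin d → ℤ) + 0) ∈ T₀ := by
    rw [add_zero]; exact Set.mem_insert_iff.mpr (Or.inl rfl)
  have h0k0T : ((0 : Fin d → ℤ) + sgl k₀) ∈ T₀ := by
    rw [zero_add]; exact Set.mem_insert_iff.mpr (Or.inr (Or.inl rfl))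
  set M := (XMod (K := K) k₀ k₁ hk).shift 0 with hM
  set w : M.V 0 →ₗ[K] K :=
    (LinearMap.proj (PLift.up h00T)).comp
      (LinearMap.fst K (PLift (((0 : Fin d → ℤ) + 0) ∈ T₀) → K)
        (PLift (((0 : Fin d → ℤ) + 0) ∈ Z) → K)) with hw
  set u : K →ₗ[K] M.V (sgl k₀) × M.V (sgl k₁) :=
    LinearMap.prod
      (LinearMap.prod (LinearMap.pi fun _ => LinearMap.id) 0)
      (LinearMap.prod (LinearMap.pi fun _ => LinearMap.id) 0) with hu
  have hgu : (M.map h₁).prod (M.map h₂) = u.comp w := by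
    refine LinearMap.ext fun v => ?_
    obtain ⟨f, s⟩ := v
    have c1 : intvMap (K := K) T₀ (add_le_add_right h₁ 0) f =
        fun _ : PLift (((0 : Fin d → ℤ) + sgl k₀) ∈ T₀) => f ⟨h00T⟩ := by
      funext hy
      erw [intvMap_apply, dif_pos h00T]
    have c2 : intvMap (K := K) Z (add_le_add_right h₁ 0) s = 0 := by
      funext hy
      exfalso
      have := hy.down
      rw [hZ, Set.mem_singleton_iff] at this
      exact single_ne_zero' k₀ (by rwa [zero_add] at this)
    have c3 : intvMap (K := K) T₀ (add_le_add_right h₂ 0) f =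
        fun _ : PLift (((0 : Fin d → ℤ) + sgl k₁) ∈ T₀) => f ⟨h00T⟩ := by
      funext hy
      erw [intvMap_apply, dif_pos h00T]
    have c4 : intvMap (K := K) Z (add_le_add_right h₂ 0) s = 0 := by
      funext hy
      exfalso
      have := hy.down
      rw [hZ, Set.mem_singleton_iff] at this
      exact single_ne_zero' k₁ (by rwa [zero_add] at this)
    show (M.map h₁ (f, s), M.map h₂ (f, s)) = u (w (f, s))
    show ((intvMap (K := K) T₀ (add_le_add_right h₁ 0) f,
            intvMap (K := K) Z (add_le_add_right h₁ 0) s),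
          (intvMap (K := K) T₀ (add_le_add_right h₂ 0) f,
            intvMap (K := K) Z (add_le_add_right h₂ 0) s)) = u (f ⟨h00T⟩)
    rw [c1, c2, c3, c4]
    rfl
  have hwsurj : LinearMap.range w = ⊤ := by
    rw [LinearMap.range_eq_top]
    intro c
    exact ⟨((fun _ => c), 0), rfl⟩
  have huinj : Function.Injective u := by
    rw [← LinearMap.ker_eq_bot, LinearMap.ker_eq_bot']
    intro c hc
    have := congrFun (congrArg (fun z : M.V (sgl k₀) × M.V (sgl k₁) => z.1.1) hc)
      (PLift.up h0k0T)
    exact this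
  rw [lrank, hgu, LinearMap.range_comp_of_range_eq_top u hwsurj,
    LinearMap.finrank_range_of_inj huinj, Module.finrank_self]

lemma lrank_gY (h₁ : (0 : Fin d → ℤ) ≤ sgl k₀) (h₂ : (0 : Fin d → ℤ) ≤ sgl k₁) :
    lrank ((((YMod (K := K) k₀ k₁).shift 0).map h₁).prod
      (((YMod (K := K) k₀ k₁).shift 0).map h₂)) = 2 := by
  set A : Set (Fin d → ℤ) := {0, sgl k₀} with hA
  set B : Set (Fin d → ℤ) := {0, sgl k₁} with hB
  have h00A : ((0 : Fin d → ℤ) + 0) ∈ A := by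
    rw [add_zero]; exact Set.mem_insert_iff.mpr (Or.inl rfl)
  have h00B : ((0 : Fin d → ℤ) + 0) ∈ B := by
    rw [add_zero]; exact Set.mem_insert_iff.mpr (Or.inl rfl)
  have h0k0A : ((0 : Fin d → ℤ) + sgl k₀) ∈ A := by
    rw [zero_add]; exact Set.mem_insert_iff.mpr (Or.inr rfl)
  have h0k1B : ((0 : Fin d → ℤ) + sgl k₁) ∈ B := by
    rw [zero_add]; exact Set.mem_insert_iff.mpr (Or.inr rfl)
  set M := (YMod (K := K) k₀ k₁).shift 0 with hM
  set g : M.V 0 →ₗ[K] M.V (sgl k₀) × M.V (sgl k₁) := (M.map h₁).prod (M.map h₂) with hg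
  have hginj : Function.Injective g := by
    rw [← LinearMap.ker_eq_bot, LinearMap.ker_eq_bot']
    rintro ⟨f, s⟩ hzero
    have hfA : intvMap (K := K) A (add_le_add_right h₁ 0) f = 0 :=
      congrArg (fun z : M.V (sgl k₀) × M.V (sgl k₁) => z.1.1) hzero
    have hsB : intvMap (K := K) B (add_le_add_right h₂ 0) s = 0 :=
      congrArg (fun z : M.V (sgl k₀) × M.V (sgl k₁) => z.2.2) hzero
    have hf0 : f ⟨h00A⟩ = 0 := by
      have := congrFun hfA (PLift.up h0k0A)
      erw [intvMap_apply, dif_pos h00A] at this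
      exact this
    have hs0 : s ⟨h00B⟩ = 0 := by
      have := congrFun hsB (PLift.up h0k1B)
      erw [intvMap_apply, dif_pos h00B] at this
      exact this
    have hf : f = 0 := by
      funext hy
      rw [Subsingleton.elim hy (PLift.up h00A)]
      exact hf0
    have hs : s = 0 := by
      funext hy
      rw [Subsingleton.elim hy (PLift.up h00B)]
      exact hs0
    rw [hf, hs]
    rfl
  rw [lrank, LinearMap.finrank_range_of_inj hginj]
  haveI uA : Unique (PLift (((0 : Fin d → ℤ) + 0) ∈ A)) :=
    ⟨⟨⟨h00A⟩⟩, fun a => by cases a; rfl⟩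
  haveI uB : Unique (PLift (((0 : Fin d → ℤ) + 0) ∈ B)) :=
    ⟨⟨⟨h00B⟩⟩, fun a => by cases a; rfl⟩
  show Module.finrank K ((PLift (((0 : Fin d → ℤ) + 0) ∈ A) → K) ×
    (PLift (((0 : Fin d → ℤ) + 0) ∈ B) → K)) = 2
  rw [Module.finrank_prod, Module.finrank_pi, Module.finrank_pi,
    Fintype.card_unique, Fintype.card_unique]

lemma XMod_shift_supp (z : Fin d → ℤ) (hz0 : z ≠ 0) (hzk0 : z ≠ sgl k₀)
    (hzk1 : z ≠ sgl k₁) : Subsingleton (((XMod (K := K) k₀ k₁ hk).shift 0).V z) := by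
  have h1 : ((0 : Fin d → ℤ) + z) ∉ ({0, sgl k₀, sgl k₁} : Set (Fin d → ℤ)) := by
    rw [zero_add]
    rintro (rfl | rfl | rfl) <;> simp_all
  have h2 : ((0 : Fin d → ℤ) + z) ∉ ({0} : Set (Fin d → ℤ)) := by
    rw [zero_add]
    rintro (rfl : z = 0); exact hz0 rfl
  haveI := intv_subsingleton (K := K) ({0, sgl k₀, sgl k₁} : Set (Fin d → ℤ)) h1
  haveI := intv_subsingleton (K := K) ({0} : Set (Fin d → ℤ)) h2
  show Subsingleton ((PLift (((0 : Fin d → ℤ) + z) ∈ ({0, sgl k₀, sgl k₁} : Set (Fin d → ℤ))) → K) ×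
    (PLift (((0 : Fin d → ℤ) + z) ∈ ({0} : Set (Fin d → ℤ))) → K))
  infer_instance

lemma YMod_shift_supp (z : Fin d → ℤ) (hz0 : z ≠ 0) (hzk0 : z ≠ sgl k₀)
    (hzk1 : z ≠ sgl k₁) : Subsingleton (((YMod (K := K) k₀ k₁).shift 0).V z) := by
  have h1 : ((0 : Fin d → ℤ) + z) ∉ ({0, sgl k₀} : Set (Fin d → ℤ)) := by
    rw [zero_add]
    rintro (rfl | rfl) <;> simp_all
  have h2 : ((0 : Fin d → ℤ) + z) ∉ ({0, sgl k₁} : Set (Fin d → ℤ)) := by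
    rw [zero_add]
    rintro (rfl | rfl) <;> simp_all
  haveI := intv_subsingleton (K := K) ({0, sgl k₀} : Set (Fin d → ℤ)) h1
  haveI := intv_subsingleton (K := K) ({0, sgl k₁} : Set (Fin d → ℤ)) h2
  show Subsingleton ((PLift (((0 : Fin d → ℤ) + z) ∈ ({0, sgl k₀} : Set (Fin d → ℤ))) → K) ×
    (PLift (((0 : Fin d → ℤ) + z) ∈ ({0, sgl k₁} : Set (Fin d → ℤ))) → K))
  infer_instance

lemma not_iso_XY : ¬ PersistenceIso (XMod (K := K) k₀ k₁ hk) (YMod (K := K) k₀ k₁) := by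
  rintro ⟨F, hbij⟩
  set T₀ : Set (Fin d → ℤ) := {0, sgl k₀, sgl k₁} with hT₀
  set Z : Set (Fin d → ℤ) := {0} with hZ
  set A : Set (Fin d → ℤ) := {0, sgl k₀} with hA
  set B : Set (Fin d → ℤ) := {0, sgl k₁} with hB
  have h0A : (0 : Fin d → ℤ) ∈ A := Set.mem_insert_iff.mpr (Or.inl rfl)
  have h0B : (0 : Fin d → ℤ) ∈ B := Set.mem_insert_iff.mpr (Or.inl rfl)
  have h0Z : (0 : Fin d → ℤ) ∈ Z := rfl
  have hk0A : sgl k₀ ∈ A := Set.mem_insert_iff.mpr (Or.inr rfl)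
  have hk1B : sgl k₁ ∈ B := Set.mem_insert_iff.mpr (Or.inr rfl)
  have h₁ : (0 : Fin d → ℤ) ≤ sgl k₀ := single_nonneg' k₀
  have h₂ : (0 : Fin d → ℤ) ≤ sgl k₁ := single_nonneg' k₁
  set v : (PLift ((0 : Fin d → ℤ) ∈ T₀) → K) × (PLift ((0 : Fin d → ℤ) ∈ Z) → K) :=
    ((0 : PLift ((0 : Fin d → ℤ) ∈ T₀) → K),
      (fun _ : PLift ((0 : Fin d → ℤ) ∈ Z) => (1 : K))) with hv
  have hXv₁ : (XMod (K := K) k₀ k₁ hk).map h₁ v = 0 := by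
    show (intvMap (K := K) T₀ h₁ v.1, intvMap (K := K) Z h₁ v.2) =
      ((0 : PLift (sgl k₀ ∈ T₀) → K), (0 : PLift (sgl k₀ ∈ Z) → K))
    refine Prod.ext (by rw [show v.1 = 0 from rfl]; exact map_zero _) ?_
    show intvMap (K := K) Z h₁ v.2 = 0
    funext hy
    exfalso
    have := hy.down
    rw [hZ, Set.mem_singleton_iff] at this
    exact single_ne_zero' k₀ this
  have hXv₂ : (XMod (K := K) k₀ k₁ hk).map h₂ v = 0 := by
    show (intvMap (K := K) T₀ h₂ v.1, intvMap (K := K) Z h₂ v.2) =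
      ((0 : PLift (sgl k₁ ∈ T₀) → K), (0 : PLift (sgl k₁ ∈ Z) → K))
    refine Prod.ext (by rw [show v.1 = 0 from rfl]; exact map_zero _) ?_
    show intvMap (K := K) Z h₂ v.2 = 0
    funext hy
    exfalso
    have := hy.down
    rw [hZ, Set.mem_singleton_iff] at this
    exact single_ne_zero' k₁ this
  have hY₁ : (YMod (K := K) k₀ k₁).map h₁ (F.app 0 v) = 0 := by
    have hnat := LinearMap.congr_fun (F.naturality h₁) v
    change F.app (sgl k₀) ((XMod (K := K) k₀ k₁ hk).map h₁ v) =
      (YMod (K := K) k₀ k₁).map h₁ (F.app 0 v) at hnat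
    rw [hXv₁, map_zero] at hnat
    exact hnat.symm
  have hY₂ : (YMod (K := K) k₀ k₁).map h₂ (F.app 0 v) = 0 := by
    have hnat := LinearMap.congr_fun (F.naturality h₂) v
    change F.app (sgl k₁) ((XMod (K := K) k₀ k₁ hk).map h₂ v) =
      (YMod (K := K) k₀ k₁).map h₂ (F.app 0 v) at hnat
    rw [hXv₂, map_zero] at hnat
    exact hnat.symm
  have hfA : intvMap (K := K) A h₁ (F.app 0 v).1 = 0 :=
    congrArg (fun z : (YMod (K := K) k₀ k₁).V (sgl k₀) => z.1) hY₁
  have hsB : intvMap (K := K) B h₂ (F.app 0 v).2 = 0 :=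
    congrArg (fun z : (YMod (K := K) k₀ k₁).V (sgl k₁) => z.2) hY₂
  have hf : (F.app 0 v).1 = 0 := by
    funext hy
    rw [Subsingleton.elim hy (PLift.up h0A)]
    have := congrFun hfA (PLift.up hk0A)
    erw [intvMap_apply, dif_pos h0A] at this
    exact this
  have hs : (F.app 0 v).2 = 0 := by
    funext hy
    rw [Subsingleton.elim hy (PLift.up h0B)]
    have := congrFun hsB (PLift.up hk1B)
    erw [intvMap_apply, dif_pos h0B] at this
    exact this
  have hv0 : F.app 0 v = 0 := by
    show ((F.app 0 v).1, (F.app 0 v).2) =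
      ((0 : PLift ((0 : Fin d → ℤ) ∈ A) → K), (0 : PLift ((0 : Fin d → ℤ) ∈ B) → K))
    rw [hf, hs]
    rfl
  have : v = 0 := by
    apply (hbij 0).1
    rw [hv0]
    exact (map_zero (F.app 0)).symm
  have hone : (1 : K) = 0 :=
    congrFun (congrArg Prod.snd this) (PLift.up h0Z)
  exact one_ne_zero hone

end Mods12

/-- for `d ≥ 2` there are grid modules with equal rank invariants but
different degree-`1` Jordan rank invariants; in particular they are non-isomorphic. -/
theorem statement12 (K : Type) [Field K] (d : ℕ) (hd : 2 ≤ d) (ℓ : Fin d → ℕ)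
    (hℓ : ∀ k, 1 ≤ ℓ k) (n : ℕ) (hn : n = (∑ k, ℓ k) + 1) :
    ∃ X Y : PersistenceModule K (Fin d → ℤ),
      X.pfd ∧ Y.pfd ∧ supportedOn X (gridSet d ℓ) ∧ supportedOn Y (gridSet d ℓ) ∧
      (∀ x y : Fin d → ℤ, rankInv X x y = rankInv Y x y) ∧
      jordanRk X (fun i : Fin n => gridSlice d ℓ (i : ℕ)) 1 0 0 = (1 : ℕ∞) ∧
      jordanRk Y (fun i : Fin n => gridSlice d ℓ (i : ℕ)) 1 0 0 = (2 : ℕ∞) ∧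
      jordanRk X (fun i : Fin n => gridSlice d ℓ (i : ℕ)) 1 0 0 ≠
        jordanRk Y (fun i : Fin n => gridSlice d ℓ (i : ℕ)) 1 0 0 ∧
      ¬ PersistenceIso X Y := by
  have hd0 : 0 < d := by omega
  have hd1 : 1 < d := by omega
  set k₀ : Fin d := ⟨0, hd0⟩ with hk₀def
  set k₁ : Fin d := ⟨1, hd1⟩ with hk₁def
  have hk : k₀ ≠ k₁ := by
    intro h
    have := congrArg Fin.val h
    simp [hk₀def, hk₁def] at this
  have hsum : 2 ≤ ∑ k, ℓ k := by
    have h1 : (∑ _k : Fin d, 1) ≤ ∑ k, ℓ k := Finset.sum_le_sum (fun k _ => hℓ k)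
    have h2 : (∑ _k : Fin d, 1) = d := by simp
    omega
  have h0n : 0 < n := by omega
  have h1n : 1 < n := by omega
  have h₁ : (0 : Fin d → ℤ) ≤ sgl k₀ := single_nonneg' k₀
  have h₂ : (0 : Fin d → ℤ) ≤ sgl k₁ := single_nonneg' k₁
  have eqX : jordanRk (XMod (K := K) k₀ k₁ hk)
      (fun i : Fin n => gridSlice d ℓ (i : ℕ)) 1 0 0 = (1 : ℕ∞) := by
    rw [jordanRk_one_zero,
      lrank_TMap_eq _ h0n h1n ℓ hℓ k₀ k₁ hk (XMod_shift_supp k₀ k₁ hk) h₁ h₂,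
      lrank_gX k₀ k₁ hk h₁ h₂, Nat.cast_one]
  have eqY : jordanRk (YMod (K := K) k₀ k₁)
      (fun i : Fin n => gridSlice d ℓ (i : ℕ)) 1 0 0 = (2 : ℕ∞) := by
    rw [jordanRk_one_zero,
      lrank_TMap_eq _ h0n h1n ℓ hℓ k₀ k₁ hk (YMod_shift_supp k₀ k₁) h₁ h₂,
      lrank_gY k₀ k₁ h₁ h₂, Nat.cast_ofNat]
  refine ⟨XMod k₀ k₁ hk, YMod k₀ k₁, XMod_pfd k₀ k₁ hk, YMod_pfd k₀ k₁,
    XMod_supported k₀ k₁ hk ℓ hℓ, YMod_supported k₀ k₁ ℓ hℓ,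
    rankInv_XY k₀ k₁ hk, eqX, eqY, ?_, not_iso_XY k₀ k₁ hk⟩
  rw [eqX, eqY]
  norm_num

end
end
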